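/- arXiv:1510.03454 — 6 statements merged into one kernel-verified Lean document; each statement's English description precedes it below -/
import Mathlib

section
/- Let T be the map on pairs (ρ₁, ρ₂) of 2×2 complex matrices defined by T(ρ₁, ρ₂) = ((ρ₁+ρ₂)/2, (ρ₁+ρ₂)/2) (the open quantum random walk induced by the order-2 quantum transition matrix all of whose entries are I/√2). Then there exist vector states ρ = (ρ₁, ρ₂) and η = (η₁, η₂) such that for every r ≥ 1, ‖T^r ρ − T^r η‖₁ = 1/4. In particular sup over pairs of vector states of ‖T^r ρ − T^r η‖₁ does not tend to 0 as r → ∞, i.e. the homogeneous quantum Markov chain {T^r} is not weakly ergodic, even though all components of T^r(ρ) are equal for every ρ (ergodicity in the columns-equal sense). -/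
open Matrix ComplexOrder

/-- tr|M| where |M| = √(M*M). -/
noncomputable def absTrace (M : Matrix (Fin 2) (Fin 2) ℂ) : ℝ :=
  (Matrix.trace (open scoped MatrixOrder in CFC.sqrt (Mᴴ * M))).re

/-- ‖(X₁,X₂)‖₁ = (1/4)(tr|X₁| + tr|X₂|). -/
noncomputable def normOne (X : Matrix (Fin 2) (Fin 2) ℂ × Matrix (Fin 2) (Fin 2) ℂ) : ℝ :=
  (1 / 4) * (absTrace X.1 + absTrace X.2)

/-- A vector state: a pair of positive semidefinite 2×2 matrices of total trace 1. -/
def IsVectorState (ρ : Matrix (Fin 2) (Fin 2) ℂ × Matrix (Fin 2) (Fin 2) ℂ) : Prop :=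
  ρ.1.PosSemidef ∧ ρ.2.PosSemidef ∧ Matrix.trace ρ.1 + Matrix.trace ρ.2 = 1

/- ## Auxiliary lemmas -/

lemma diag_nn {A : Matrix (Fin 2) (Fin 2) ℂ} (hA : A.PosSemidef) (i : Fin 2) :
    0 ≤ (A i i).re ∧ (A i i).im = 0 := by
  have h := hA.dotProduct_mulVec_nonneg (Pi.single i 1)
  have he : star (Pi.single i 1 : Fin 2 → ℂ) ⬝ᵥ (A *ᵥ Pi.single i 1) = A i i := by
    simp [Matrix.mulVec_single, dotProduct]
    fin_cases i <;> simp [Pi.single]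
  rw [he, Complex.le_def] at h
  exact ⟨h.1, h.2.symm⟩

lemma offdiag_bound {A : Matrix (Fin 2) (Fin 2) ℂ} (hA : A.PosSemidef) :
     ‖A 0 1‖ ≤ ((A 0 0).re + (A 1 1).re) / 2 := by
  set a := A 0 1 with ha
  by_cases h0 : a = 0
  · have h0' := (diag_nn hA 0).1
    have h1' := (diag_nn hA 1).1
    rw [h0]; simp; linarith
  have habs : (0:ℝ) < ‖a‖ := by simpa using norm_pos_iff.mpr h0
  set c : ℂ := -(starRingEnd ℂ) a / ((‖a‖ : ℝ) : ℂ) with hc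
  have h := hA.dotProduct_mulVec_nonneg ![1, c]
  have hherm : A 1 0 = (starRingEnd ℂ) a := by
    rw [ha, ← hA.1.apply 1 0]; rfl
  have he : star (![1, c] : Fin 2 → ℂ) ⬝ᵥ (A *ᵥ ![1, c]) =
      A 0 0 + A 1 1 * ((starRingEnd ℂ) c * c) + (a * c + (starRingEnd ℂ) (a * c)) := by
    simp [dotProduct, Matrix.mulVec, Fin.sum_univ_two, hherm]
    ring_nf
    rw [← ha]; ring
  have hcc : (starRingEnd ℂ) c * c = 1 := by
    rw [hc, map_div₀, map_neg, Complex.conj_conj, Complex.conj_ofReal, div_mul_div_comm,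
      neg_mul_neg, Complex.mul_conj]
    rw [div_eq_one_iff_eq (by exact_mod_cast (mul_pos habs habs).ne')]
    rw [Complex.normSq_eq_norm_sq]; push_cast; ring
  have hac : a * c = -((‖a‖ : ℝ) : ℂ) := by
    rw [hc, mul_div_assoc', mul_neg, Complex.mul_conj, Complex.normSq_eq_norm_sq, neg_div]
    rw [neg_eq_iff_eq_neg, neg_neg, div_eq_iff (by exact_mod_cast habs.ne')]
    push_cast; ring
  have hval : star (![1, c] : Fin 2 → ℂ) ⬝ᵥ (A *ᵥ ![1, c]) =
      A 0 0 + A 1 1 - 2 * ((‖a‖ : ℝ) : ℂ) := by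
    rw [he, hcc, hac]
    simp [Complex.conj_ofReal]
    ring
  rw [hval, Complex.le_def] at h
  simp only [Complex.sub_re, Complex.add_re, Complex.mul_re, Complex.zero_re] at h
  have := h.1
  simp [Complex.ofReal_re] at this
  linarith

/-- entries of a psd matrix with trace 1 have absolute value at most 1 -/
lemma entry_le_one {A : Matrix (Fin 2) (Fin 2) ℂ} (hA : A.PosSemidef)
    (htr : Matrix.trace A = 1) (i j : Fin 2) : ‖A i j‖ ≤ 1 := by
  have htr' : (A 0 0).re + (A 1 1).re = 1 := by
    rw [Matrix.trace_fin_two] at htr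
    have := congrArg Complex.re htr
    simpa using this
  have hd : ∀ k : Fin 2, ‖A k k‖ ≤ 1 := by
    intro k
    obtain ⟨hre, him⟩ := diag_nn hA k
    have hk : A k k = ((A k k).re : ℂ) := Complex.ext (by simp) (by simp [him])
    rw [hk, Complex.norm_real, Real.norm_of_nonneg hre]
    have h0 := (diag_nn hA 0).1
    have h1 := (diag_nn hA 1).1
    fin_cases k <;> simp <;> linarith
  have hod : ‖A 0 1‖ ≤ 1 := by
    have := offdiag_bound hA
    linarith
  have hod' : ‖A 1 0‖ ≤ 1 := by
    have h10 : A 1 0 = (starRingEnd ℂ) (A 0 1) := by rw [← hA.1.apply 1 0]; rfl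
    rw [h10, Complex.norm_conj]
    exact hod
  fin_cases i <;> fin_cases j <;> first
    | exact hd 0 | exact hd 1 | exact hod | exact hod'

lemma absTrace_le {M : Matrix (Fin 2) (Fin 2) ℂ} {c : ℝ} (hc : 0 ≤ c)
    (hM : ∀ i j, ‖M i j‖ ≤ c) : absTrace M ≤ 4 * c := by
  set hA := Matrix.posSemidef_conjTranspose_mul_self M
  set Q := (open scoped MatrixOrder in CFC.sqrt (Mᴴ * M)) with hQdef
  have hQ : Q.PosSemidef := by
    open scoped MatrixOrder in exact Matrix.nonneg_iff_posSemidef.mp (CFC.sqrt_nonneg (Mᴴ * M))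
  have hmul : Q * Q = Mᴴ * M := by
    open scoped MatrixOrder in exact CFC.sqrt_mul_sqrt_self _ hA.nonneg
  have key : ∀ i : Fin 2, (Q i i).re ≤ 2 * c := by
    intro i
    have e1 : ∀ k : Fin 2, Q i k * Q k i = (Complex.normSq (Q k i) : ℂ) := by
      intro k
      rw [← hQ.1.apply i k]
      exact Complex.normSq_eq_conj_mul_self.symm
    have h1 : ((Q * Q) i i).re = Complex.normSq (Q 0 i) + Complex.normSq (Q 1 i) := by
      simp [Matrix.mul_apply, Fin.sum_univ_two, e1 0, e1 1]
    have e2 : ∀ k : Fin 2, Mᴴ i k * M k i = (Complex.normSq (M k i) : ℂ) := by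
      intro k
      rw [Matrix.conjTranspose_apply]
      exact Complex.normSq_eq_conj_mul_self.symm
    have h2 : ((Mᴴ * M) i i).re = Complex.normSq (M 0 i) + Complex.normSq (M 1 i) := by
      simp [Matrix.mul_apply, Fin.sum_univ_two, e2 0, e2 1, Complex.normSq_apply]
    have hQM : ((Q * Q) i i).re = ((Mᴴ * M) i i).re := by rw [hmul]
    have hni : Complex.normSq (Q i i) ≤ Complex.normSq (Q 0 i) + Complex.normSq (Q 1 i) := by
      fin_cases i <;> simp <;>
        [linarith [Complex.normSq_nonneg (Q 1 0)]; linarith [Complex.normSq_nonneg (Q 0 1)]]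
    have hre : (Q i i).re ^ 2 ≤ Complex.normSq (Q i i) := by
      rw [Complex.normSq_apply]; nlinarith [sq_nonneg (Q i i).im]
    have hb : ∀ k : Fin 2, Complex.normSq (M k i) ≤ c ^ 2 := by
      intro k
      rw [Complex.normSq_eq_norm_sq]
      exact pow_le_pow_left₀ (norm_nonneg _) (hM k i) 2
    have hnn := (diag_nn hQ i).1
    nlinarith [hb 0, hb 1]
  rw [absTrace]
  rw [show Matrix.trace Q = Q 0 0 + Q 1 1 from Matrix.trace_fin_two Q]
  rw [Complex.add_re]
  linarith [key 0, key 1]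

lemma absTrace_quarter : absTrace (Matrix.diagonal ![(1/4 : ℂ), -(1/4)]) = 1/2 := by
  have hd : Matrix.PosSemidef (Matrix.diagonal ![(1/4 : ℂ), 1/4]) := by
    refine Matrix.PosSemidef.diagonal ?_
    intro i; fin_cases i <;> norm_num [Complex.le_def]
  have hsq : (Matrix.diagonal ![(1/4 : ℂ), 1/4]) ^ 2 =
      (Matrix.diagonal ![(1/4 : ℂ), -(1/4)])ᴴ * (Matrix.diagonal ![(1/4 : ℂ), -(1/4)]) := by
    rw [pow_two, Matrix.diagonal_conjTranspose, Matrix.diagonal_mul_diagonal,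
      Matrix.diagonal_mul_diagonal]
    ext i j
    fin_cases i <;> fin_cases j <;> simp [Matrix.diagonal] <;> norm_num [Complex.ext_iff]
  have : Matrix.diagonal ![(1/4 : ℂ), 1/4] = (open scoped MatrixOrder in
      CFC.sqrt ((Matrix.diagonal ![(1/4 : ℂ), -(1/4)])ᴴ * Matrix.diagonal ![(1/4 : ℂ), -(1/4)])) := by
    open scoped MatrixOrder in exact (CFC.sqrt_unique
      (a := (Matrix.diagonal ![(1/4 : ℂ), -(1/4)])ᴴ * Matrix.diagonal ![(1/4 : ℂ), -(1/4)])
      (b := Matrix.diagonal ![(1/4 : ℂ), 1/4]) (by rw [← pow_two]; exact hsq) hd.nonneg).symm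
  rw [absTrace, ← this, Matrix.trace_diagonal]
  simp [Fin.sum_univ_two]
  norm_num

theorem maximally_mixed_QTM_not_weakly_ergodic
    (T : (Matrix (Fin 2) (Fin 2) ℂ × Matrix (Fin 2) (Fin 2) ℂ) →
         (Matrix (Fin 2) (Fin 2) ℂ × Matrix (Fin 2) (Fin 2) ℂ))
    (hT : ∀ p, T p = (((1 : ℂ) / 2) • (p.1 + p.2), ((1 : ℂ) / 2) • (p.1 + p.2))) :
    (∃ ρ η, IsVectorState ρ ∧ IsVectorState η ∧
      ∀ r : ℕ, 1 ≤ r → normOne (T^[r] ρ - T^[r] η) = 1 / 4) ∧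
    ¬ Filter.Tendsto
        (fun r : ℕ => sSup {d : ℝ | ∃ ρ η, IsVectorState ρ ∧ IsVectorState η ∧
            d = normOne (T^[r] ρ - T^[r] η)})
        Filter.atTop (nhds 0) ∧
    (∀ σ, ∀ r : ℕ, 1 ≤ r → (T^[r] σ).1 = (T^[r] σ).2) := by
  -- the iterate formula
  have hiter : ∀ σ, ∀ r : ℕ, 1 ≤ r →
      T^[r] σ = (((1:ℂ)/2) • (σ.1 + σ.2), ((1:ℂ)/2) • (σ.1 + σ.2)) := by
    intro σ r hr
    induction r with
    | zero => omega
    | succ n ih =>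
      rcases Nat.eq_or_lt_of_le hr with h1 | h1
      · rw [← h1]; simpa using hT σ
      · have hn : 1 ≤ n := by omega
        rw [Function.iterate_succ_apply', ih hn, hT]
        have : ((1:ℂ)/2) • (((1:ℂ)/2) • (σ.1 + σ.2) + ((1:ℂ)/2) • (σ.1 + σ.2))
            = ((1:ℂ)/2) • (σ.1 + σ.2) := by
          module
        simp only [this]
  -- the two vector states
  set ρ : Matrix (Fin 2) (Fin 2) ℂ × Matrix (Fin 2) (Fin 2) ℂ :=
    (Matrix.diagonal ![(1:ℂ), 0], 0) with hρ
  set η : Matrix (Fin 2) (Fin 2) ℂ × Matrix (Fin 2) (Fin 2) ℂ :=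
    (Matrix.diagonal ![(1/2:ℂ), 1/2], 0) with hη
  have hρs : IsVectorState ρ := by
    refine ⟨Matrix.PosSemidef.diagonal ?_, Matrix.PosSemidef.zero, ?_⟩
    · intro i; fin_cases i <;> norm_num [Complex.le_def]
    · simp [hρ, Matrix.trace_diagonal, Fin.sum_univ_two]
  have hηs : IsVectorState η := by
    refine ⟨Matrix.PosSemidef.diagonal ?_, Matrix.PosSemidef.zero, ?_⟩
    · intro i; fin_cases i <;> norm_num [Complex.le_def]
    · simp [hη, Matrix.trace_diagonal, Fin.sum_univ_two]
      norm_num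
  -- the difference of the iterates
  have hdiff : ∀ r : ℕ, 1 ≤ r → T^[r] ρ - T^[r] η =
      (Matrix.diagonal ![(1/4 : ℂ), -(1/4)], Matrix.diagonal ![(1/4 : ℂ), -(1/4)]) := by
    intro r hr
    rw [hiter ρ r hr, hiter η r hr]
    have hX : ((1:ℂ)/2) • (ρ.1 + ρ.2) - ((1:ℂ)/2) • (η.1 + η.2)
        = Matrix.diagonal ![(1/4 : ℂ), -(1/4)] := by
      rw [hρ, hη]
      ext i j
      fin_cases i <;> fin_cases j <;>
        simp [Matrix.diagonal, Matrix.smul_apply, Matrix.add_apply, Matrix.sub_apply] <;>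
        norm_num
    exact Prod.ext hX hX
  have hval : ∀ r : ℕ, 1 ≤ r → normOne (T^[r] ρ - T^[r] η) = 1 / 4 := by
    intro r hr
    rw [hdiff r hr, normOne]
    simp only
    rw [absTrace_quarter]
    norm_num
  refine ⟨⟨ρ, η, hρs, hηs, hval⟩, ?_, ?_⟩
  · -- not weakly ergodic
    intro hten
    obtain ⟨N, hN⟩ := (Metric.tendsto_atTop.mp hten) (1/4) (by norm_num)
    set r := max N 1 with hrdef
    have hr1 : 1 ≤ r := le_max_right _ _
    have hrN : N ≤ r := le_max_left _ _
    have hd := hN r hrN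
    set S : Set ℝ := {d : ℝ | ∃ ρ' η', IsVectorState ρ' ∧ IsVectorState η' ∧
        d = normOne (T^[r] ρ' - T^[r] η')} with hS
    have hmem : (1/4 : ℝ) ∈ S := ⟨ρ, η, hρs, hηs, (hval r hr1).symm⟩
    have hbdd : BddAbove S := by
      refine ⟨2, fun d hd => ?_⟩
      obtain ⟨ρ', η', hρ', hη', rfl⟩ := hd
      rw [hiter ρ' r hr1, hiter η' r hr1]
      have hent : ∀ (σ' : Matrix (Fin 2) (Fin 2) ℂ × Matrix (Fin 2) (Fin 2) ℂ),
          IsVectorState σ' → ∀ i j, ‖(σ'.1 + σ'.2) i j‖ ≤ 1 := by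
        intro σ' hσ' i j
        have hpsd : (σ'.1 + σ'.2).PosSemidef := hσ'.1.add hσ'.2.1
        have htr : Matrix.trace (σ'.1 + σ'.2) = 1 := by
          rw [Matrix.trace_add]; exact hσ'.2.2
        exact entry_le_one hpsd htr i j
      have hXent : ∀ i j, 
          ‖(((1:ℂ)/2) • (ρ'.1 + ρ'.2) - ((1:ℂ)/2) • (η'.1 + η'.2)) i j‖ ≤ 1 := by
        intro i j
        have h1 := hent ρ' hρ' i j
        have h2 := hent η' hη' i j
        calc ‖(((1:ℂ)/2) • (ρ'.1 + ρ'.2) - ((1:ℂ)/2) • (η'.1 + η'.2)) i j‖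
            = ‖((1:ℂ)/2) * ((ρ'.1 + ρ'.2) i j) - ((1:ℂ)/2) * ((η'.1 + η'.2) i j)‖ := by
              congr 1
          _ ≤ ‖((1:ℂ)/2) * ((ρ'.1 + ρ'.2) i j)‖
              + ‖((1:ℂ)/2) * ((η'.1 + η'.2) i j)‖ := by
              exact norm_sub_le _ _
          _ ≤ 1 := by
              rw [norm_mul, norm_mul]
              have : ‖(1:ℂ)/2‖ = 1/2 := by
                rw [show ((1:ℂ)/2) = ((1/2 : ℝ) : ℂ) by norm_num, Complex.norm_real]
                norm_num
              rw [this]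
              linarith
      have hat := absTrace_le (by norm_num : (0:ℝ) ≤ 1) hXent
      rw [normOne]
      simp only [Prod.fst_sub, Prod.snd_sub]
      linarith [hat]
    have hsup : (1/4 : ℝ) ≤ sSup S := le_csSup hbdd hmem
    rw [Real.dist_eq, sub_zero] at hd
    have : |sSup S| < 1/4 := hd
    have h4 : sSup S < 1/4 := lt_of_abs_lt this
    linarith
  · -- columns equal
    intro σ r hr
    rw [hiter σ r hr]
end

section
/- Let (B_i^j)_{i,j∈ℤ} define an OQRW on ℤ and let A ⊆ ℤ. Suppose (x_i)_{i∈ℤ} is a family of linear functionals on the k×k complex matrices such that: x_i(X) ≥ 0 whenever X is positive semidefinite; x_i(X) = tr(X) for every i ∈ A; and for every i ∉ A and every positive semidefinite X, x_i(X) = ∑_j x_j( B_i^j X (B_i^j)* ). Then x_i(ρ) ≥ h_i^A(ρ) for every i ∈ ℤ and every density matrix ρ. (Thus, since the hitting probabilities themselves satisfy this system, the vector (h_i^A) is the minimal nonnegative solution of it.) -/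
open Matrix ComplexOrder

/-- A first-passage path from `i` to the set `A ⊆ ℤ`: a finite sequence
i = x₀, x₁, …, x_r with r ≥ 1, x₀, …, x_{r−1} ∉ A and x_r ∈ A. -/
structure FPPath (A : Set ℤ) (i : ℤ) where
  r : ℕ
  x : ℕ → ℤ
  hr : 1 ≤ r
  hx0 : x 0 = i
  hmid : ∀ m, m < r → x m ∉ A
  hlast : x r ∈ A
  htail : ∀ m, r ≤ m → x m = x r

/-- The path operator C = B_{x_{r−1}}^{x_r} ⋯ B_{x₁}^{x₂} B_{x₀}^{x₁}. -/
noncomputable def pathOp {k : ℕ} (B : ℤ → ℤ → Matrix (Fin k) (Fin k) ℂ)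
    {A : Set ℤ} {i : ℤ} (p : FPPath A i) : Matrix (Fin k) (Fin k) ℂ :=
  (List.range p.r).foldl (fun M m => B (p.x m) (p.x (m + 1)) * M) 1

-- Hitting probability h_i^A(ρ): sum of tr(C ρ C*) over all first-passage paths, 1 on A.
open Classical in
noncomputable def hitProb {k : ℕ} (B : ℤ → ℤ → Matrix (Fin k) (Fin k) ℂ)
    (A : Set ℤ) (i : ℤ) (ρ : Matrix (Fin k) (Fin k) ℂ) : ℝ :=
  if i ∈ A then 1
  else ∑' p : FPPath A i, (Matrix.trace (pathOp B p * ρ * (pathOp B p)ᴴ)).re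

/-! ### Auxiliary lemmas -/

lemma FPPath.ext' {A : Set ℤ} {i : ℤ} {p q : FPPath A i}
    (hr : p.r = q.r) (hx : p.x = q.x) : p = q := by
  cases p; cases q; simp only at hr hx; subst hr; subst hx; rfl

lemma FPPath.two_le_r {A : Set ℤ} {i j : ℤ} (hj : j ∉ A) (p : FPPath A i)
    (hp : p.x 1 = j) : 2 ≤ p.r := by
  by_contra h
  have h1 : p.r = 1 := le_antisymm (by omega) p.hr
  have := p.hlast
  rw [h1, hp] at this
  exact hj this

/-- The path obtained by removing the first step. -/
def FPPath.shift {A : Set ℤ} {i j : ℤ} (hj : j ∉ A) (p : FPPath A i)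
    (hp : p.x 1 = j) : FPPath A j where
  r := p.r - 1
  x := fun m => p.x (m + 1)
  hr := by have := p.two_le_r hj hp; omega
  hx0 := hp
  hmid := fun m hm => p.hmid (m + 1) (by omega)
  hlast := by
    show p.x (p.r - 1 + 1) ∈ A
    have h1 : p.r - 1 + 1 = p.r := by have := p.hr; omega
    rw [h1]; exact p.hlast
  htail := by
    intro m hm
    show p.x (m + 1) = p.x (p.r - 1 + 1)
    have h1 : p.r - 1 + 1 = p.r := by have := p.hr; omega
    rw [h1, p.htail (m + 1) (by omega)]

/-- The one-step path from `i` to `j`. -/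
def oneStep {A : Set ℤ} {i : ℤ} (j : ℤ) (hi : i ∉ A) (hj : j ∈ A) : FPPath A i where
  r := 1
  x := fun m => if m = 0 then i else j
  hr := le_refl 1
  hx0 := by simp
  hmid := by intro m hm; have hm0 : m = 0 := by omega
             simp [hm0, hi]
  hlast := by simpa using hj
  htail := by
    intro m hm
    have hm0 : m ≠ 0 := by omega
    simp [hm0]

lemma foldl_mul_aux {k : ℕ} (g : ℕ → Matrix (Fin k) (Fin k) ℂ) :
    ∀ (l : List ℕ) (C : Matrix (Fin k) (Fin k) ℂ),
      l.foldl (fun M m => g m * M) C = l.foldl (fun M m => g m * M) 1 * C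
  | [], C => by simp
  | a :: l, C => by
    simp only [List.foldl_cons]
    rw [foldl_mul_aux g l (g a * C), foldl_mul_aux g l (g a * 1)]
    simp [Matrix.mul_assoc]

lemma pathOp_shift {k : ℕ} (B : ℤ → ℤ → Matrix (Fin k) (Fin k) ℂ)
    {A : Set ℤ} {i j : ℤ} (hj : j ∉ A) (p : FPPath A i) (hp : p.x 1 = j) :
    pathOp B p = pathOp B (p.shift hj hp) * B i j := by
  have h2 := p.two_le_r hj hp
  obtain ⟨s, hs⟩ : ∃ s, p.r = s + 1 := ⟨p.r - 1, by omega⟩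
  unfold pathOp FPPath.shift
  simp only [hs, Nat.add_sub_cancel, List.range_succ_eq_map, List.foldl_cons,
    List.foldl_map]
  rw [foldl_mul_aux]
  congr 1
  simp [p.hx0, hp]

lemma pathOp_one {k : ℕ} (B : ℤ → ℤ → Matrix (Fin k) (Fin k) ℂ)
    {A : Set ℤ} {i : ℤ} (p : FPPath A i) (h : p.r = 1) :
    pathOp B p = B i (p.x 1) := by
  unfold pathOp
  simp [h, List.range_succ, p.hx0]

lemma trace_re_nonneg {k : ℕ} {M : Matrix (Fin k) (Fin k) ℂ}
    (hM : M.PosSemidef) : 0 ≤ (Matrix.trace M).re := by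
  rw [Matrix.trace, Complex.re_sum]
  refine Finset.sum_nonneg fun i _ => ?_
  have h := hM.re_dotProduct_nonneg (Pi.single i 1)
  simpa [dotProduct, Matrix.mulVec, Pi.single_apply, Finset.sum_ite_eq,
    Matrix.diag] using h

open Classical in
/-- Bound on the contribution of a fiber of first-passage paths whose first step goes to
`j ∉ A`, in terms of a bound for shorter paths starting at `j`. -/
lemma fiber_bound {k : ℕ} (B : ℤ → ℤ → Matrix (Fin k) (Fin k) ℂ)
    {A : Set ℤ} {i j : ℤ} (hjA : j ∉ A)
    (X : Matrix (Fin k) (Fin k) ℂ)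
    (F : Finset (FPPath A i)) (n : ℕ) (hF : ∀ p ∈ F, p.r ≤ n + 1)
    (c : ℝ)
    (ihc : ∀ G : Finset (FPPath A j), (∀ q ∈ G, q.r ≤ n) →
      ∑ q ∈ G, (Matrix.trace (pathOp B q * (B i j * X * (B i j)ᴴ) * (pathOp B q)ᴴ)).re ≤ c) :
    ∑ p ∈ F.filter (fun p => p.x 1 = j),
      (Matrix.trace (pathOp B p * X * (pathOp B p)ᴴ)).re ≤ c := by
  classical
  set Ffil := F.filter (fun p => p.x 1 = j) with hFfil
  have hmem : ∀ p ∈ Ffil, p.x 1 = j := fun p hp => (Finset.mem_filter.mp hp).2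
  set φ : {p // p ∈ Ffil} → FPPath A j :=
    fun p => (p.1).shift hjA (hmem p.1 p.2) with hφ
  have hinj : Function.Injective φ := by
    intro p q h
    have hr2p := (p.1).two_le_r hjA (hmem p.1 p.2)
    have hr2q := (q.1).two_le_r hjA (hmem q.1 q.2)
    have hrr : p.1.r - 1 = q.1.r - 1 := congrArg FPPath.r h
    have hxx : (fun m => p.1.x (m + 1)) = (fun m => q.1.x (m + 1)) :=
      congrArg FPPath.x h
    have : p.1 = q.1 := by
      refine FPPath.ext' (by omega) (funext fun m => ?_)
      match m with
      | 0 => rw [p.1.hx0, q.1.hx0]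
      | Nat.succ m => exact congrFun hxx m
    exact Subtype.ext this
  have hterm : ∀ p : {p // p ∈ Ffil},
      (Matrix.trace (pathOp B (φ p) * (B i j * X * (B i j)ᴴ) * (pathOp B (φ p))ᴴ)).re
      = (Matrix.trace (pathOp B p.1 * X * (pathOp B p.1)ᴴ)).re := by
    intro p
    rw [pathOp_shift B hjA p.1 (hmem p.1 p.2)]
    simp only [hφ, Matrix.conjTranspose_mul, Matrix.mul_assoc]
  calc ∑ p ∈ Ffil, (Matrix.trace (pathOp B p * X * (pathOp B p)ᴴ)).re
      = ∑ p ∈ Ffil.attach, (Matrix.trace (pathOp B p.1 * X * (pathOp B p.1)ᴴ)).re :=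
        (Finset.sum_attach Ffil _).symm
    _ = ∑ p ∈ Ffil.attach,
          (Matrix.trace (pathOp B (φ p) * (B i j * X * (B i j)ᴴ) * (pathOp B (φ p))ᴴ)).re :=
        Finset.sum_congr rfl (fun p _ => (hterm p).symm)
    _ = ∑ q ∈ Ffil.attach.image φ,
          (Matrix.trace (pathOp B q * (B i j * X * (B i j)ᴴ) * (pathOp B q)ᴴ)).re :=
        (Finset.sum_image (s := Ffil.attach) (g := φ)
          (f := fun q => (Matrix.trace (pathOp B q * (B i j * X * (B i j)ᴴ) * (pathOp B q)ᴴ)).re)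
          (fun a _ b _ h => hinj h)).symm
    _ ≤ c := by
        refine ihc _ ?_
        intro q hq
        obtain ⟨p, hpmem, rfl⟩ := Finset.mem_image.mp hq
        have hpF : p.1 ∈ F := Finset.mem_of_mem_filter _ p.2
        have := hF p.1 hpF
        show p.1.r - 1 ≤ n
        omega

set_option maxHeartbeats 1000000 in
open Classical in
/-- The key finite-sum estimate, by induction on the maximal path length. -/
lemma key_lemma {k : ℕ} (B : ℤ → ℤ → Matrix (Fin k) (Fin k) ℂ)
    (hfin : ∀ i, {j : ℤ | B i j ≠ 0}.Finite)
    (A : Set ℤ)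
    (x : ℤ → (Matrix (Fin k) (Fin k) ℂ →ₗ[ℂ] ℂ))
    (hpos : ∀ i (X : Matrix (Fin k) (Fin k) ℂ), X.PosSemidef →
      0 ≤ (x i X).re ∧ (x i X).im = 0)
    (hA : ∀ i ∈ A, ∀ X : Matrix (Fin k) (Fin k) ℂ, x i X = Matrix.trace X)
    (hrec : ∀ i ∉ A, ∀ X : Matrix (Fin k) (Fin k) ℂ, X.PosSemidef →
      x i X = ∑' j : ℤ, x j (B i j * X * (B i j)ᴴ)) :
    ∀ n : ℕ, ∀ i, i ∉ A → ∀ X : Matrix (Fin k) (Fin k) ℂ, X.PosSemidef →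
      ∀ F : Finset (FPPath A i), (∀ p ∈ F, p.r ≤ n) →
      ∑ p ∈ F, (Matrix.trace (pathOp B p * X * (pathOp B p)ᴴ)).re ≤ (x i X).re := by
  intro n
  induction n with
  | zero =>
    intro i hi X hX F hF
    have hFe : F = ∅ := Finset.eq_empty_of_forall_notMem fun p hp => by
      have h1 := p.hr; have h2 := hF p hp; omega
    rw [hFe, Finset.sum_empty]
    exact (hpos i X hX).1
  | succ n ih =>
    intro i hi X hX F hF
    set S := (hfin i).toFinset with hS
    have hterm0 : ∀ j ∉ S, x j (B i j * X * (B i j)ᴴ) = 0 := by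
      intro j hjS
      have hBij : B i j = 0 := by
        by_contra hne
        exact hjS ((hfin i).mem_toFinset.mpr hne)
      simp [hBij]
    have hxre : (x i X).re = ∑ j ∈ S, (x j (B i j * X * (B i j)ᴴ)).re := by
      rw [hrec i hi X hX, tsum_eq_sum hterm0, Complex.re_sum]
    have htnn : ∀ j, 0 ≤ (x j (B i j * X * (B i j)ᴴ)).re := fun j =>
      (hpos j _ (hX.mul_mul_conjTranspose_same (B i j))).1
    have hfib := Finset.sum_fiberwise_of_maps_to (g := fun p : FPPath A i => p.x 1)
      (t := F.image (fun p => p.x 1)) (fun p hp => Finset.mem_image_of_mem _ hp)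
      (fun p => (Matrix.trace (pathOp B p * X * (pathOp B p)ᴴ)).re)
    rw [← hfib, hxre]
    have hfiber : ∀ j, ∑ p ∈ F.filter (fun p => p.x 1 = j),
        (Matrix.trace (pathOp B p * X * (pathOp B p)ᴴ)).re
        ≤ (x j (B i j * X * (B i j)ᴴ)).re := by
      intro j
      by_cases hjA : j ∈ A
      · -- one-step paths
        set p₀ : FPPath A i := oneStep j hi hjA with hp₀
        have hsub : F.filter (fun p => p.x 1 = j) ⊆ {p₀} := by
          intro p hp
          obtain ⟨hpF, hp1⟩ := Finset.mem_filter.mp hp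
          have hr1 : p.r = 1 := by
            by_contra hne
            have h2 : 2 ≤ p.r := by have := p.hr; omega
            exact (hp1 ▸ p.hmid 1 (by omega)) hjA
          have : p = p₀ := by
            refine FPPath.ext' (by simp [hp₀, oneStep, hr1]) (funext fun m => ?_)
            match m with
            | 0 => simpa [hp₀, oneStep] using p.hx0
            | Nat.succ m =>
              have := p.htail (m + 1) (by omega)
              rw [hr1] at this
              simp [hp₀, oneStep, this, hp1]
          rw [this]; exact Finset.mem_singleton_self _
        refine le_trans (Finset.sum_le_sum_of_subset_of_nonneg hsub
          (fun p _ _ => trace_re_nonneg (hX.mul_mul_conjTranspose_same _))) ?_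
        rw [Finset.sum_singleton, hA j hjA]
        have hx1 : p₀.x 1 = j := by simp [hp₀, oneStep]
        rw [pathOp_one B p₀ rfl, hx1]
      · -- recurse on shifted paths
        exact fiber_bound B hjA X F n hF _
          (fun G hG => ih j hjA _ (hX.mul_mul_conjTranspose_same _) G hG)
    calc ∑ j ∈ F.image (fun p => p.x 1), ∑ p ∈ F.filter (fun p => p.x 1 = j),
          (Matrix.trace (pathOp B p * X * (pathOp B p)ᴴ)).re
        ≤ ∑ j ∈ F.image (fun p => p.x 1), (x j (B i j * X * (B i j)ᴴ)).re :=
          Finset.sum_le_sum fun j _ => hfiber j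
      _ ≤ ∑ j ∈ F.image (fun p => p.x 1) ∪ S, (x j (B i j * X * (B i j)ᴴ)).re :=
          Finset.sum_le_sum_of_subset_of_nonneg Finset.subset_union_left
            (fun j _ _ => htnn j)
      _ = ∑ j ∈ S, (x j (B i j * X * (B i j)ᴴ)).re :=
          (Finset.sum_subset Finset.subset_union_right
            (fun j _ hj => by rw [hterm0 j hj, Complex.zero_re])).symm

/-- minimality of hitting probabilities. If (x_i) is a family of linear
functionals, nonnegative on positive semidefinite matrices, equal to the trace on A,
and satisfying x_i(X) = ∑_j x_j(B_i^j X (B_i^j)*) for i ∉ A and X positive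
semidefinite, then x_i(ρ) ≥ h_i^A(ρ) for every i and every density matrix ρ. -/
theorem hitProb_minimal (k : ℕ) (hk : 1 ≤ k)
    (B : ℤ → ℤ → Matrix (Fin k) (Fin k) ℂ)
    (hfin : ∀ i, {j : ℤ | B i j ≠ 0}.Finite)
    (hunit : ∀ i, ∑ᶠ j : ℤ, (B i j)ᴴ * B i j = 1)
    (A : Set ℤ)
    (x : ℤ → (Matrix (Fin k) (Fin k) ℂ →ₗ[ℂ] ℂ))
    (hpos : ∀ i (X : Matrix (Fin k) (Fin k) ℂ), X.PosSemidef →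
      0 ≤ (x i X).re ∧ (x i X).im = 0)
    (hA : ∀ i ∈ A, ∀ X : Matrix (Fin k) (Fin k) ℂ, x i X = Matrix.trace X)
    (hrec : ∀ i ∉ A, ∀ X : Matrix (Fin k) (Fin k) ℂ, X.PosSemidef →
      x i X = ∑' j : ℤ, x j (B i j * X * (B i j)ᴴ)) :
    ∀ i : ℤ, ∀ ρ : Matrix (Fin k) (Fin k) ℂ, ρ.PosSemidef → Matrix.trace ρ = 1 →
      hitProb B A i ρ ≤ (x i ρ).re := by
  intro i ρ hρ htr
  by_cases hiA : i ∈ A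
  · unfold hitProb
    rw [if_pos hiA, hA i hiA ρ, htr]
    norm_num
  · unfold hitProb
    rw [if_neg hiA]
    refine tsum_le_of_sum_le' (hpos i ρ hρ).1 ?_
    intro u
    exact key_lemma B hfin A x hpos hA hrec (u.sup FPPath.r) i hiA ρ hρ u
      (fun p hp => Finset.le_sup hp)
end

section
/- Let (B_i^j)_{i,j∈ℤ} define an OQRW on ℤ, let a ≥ 1, D = {i ∈ ℤ : −a < i < a}, ∂D = {−a, a}, and assume B_i^j = 0 whenever i ∈ D and j ∉ D ∪ ∂D. Let c : D → [0,∞) and f : ∂D → [0,∞). Assume hitting the boundary is certain: for every i ∈ D and every density matrix ρ, ∑_C tr(C ρ C*) = 1, the sum over all first-passage paths C from i to ∂D. Then the boundary value problem has at most one bounded solution: if (ψ_i)_{i∈D∪∂D} and (ψ'_i)_{i∈D∪∂D} are families of linear functionals on the k×k complex matrices, both satisfying ψ_j(X) = f(j)·tr(X) for j ∈ ∂D, ψ_i(X) = c(i)·tr(X) + ∑_{j∈D∪∂D} ψ_j( B_i^j X (B_i^j)* ) for i ∈ D and all positive semidefinite X, and both bounded in the sense that there is M with |ψ_i(ρ)|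 ≤ M and |ψ'_i(ρ)| ≤ M for all i and all density matrices ρ, then ψ_i(ρ) = ψ'_i(ρ) for all i ∈ D ∪ ∂D and all density matrices ρ. -/
open Matrix ComplexOrder

/-- A first-passage path from `i ∈ D = (−a, a)` to the boundary `∂D = {−a, a}`:
a finite sequence i = x₀, x₁, …, x_r with r ≥ 1, x₀, …, x_{r−1} ∈ D and x_r ∈ ∂D. -/
structure BPath (a i : ℤ) where
  r : ℕ
  x : ℕ → ℤ
  hr : 1 ≤ r
  hx0 : x 0 = i
  hmid : ∀ m, m < r → -a < x m ∧ x m < a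
  hlast : x r = -a ∨ x r = a
  htail : ∀ m, r ≤ m → x m = x r

/-- The path operator C = B_{x_{r−1}}^{x_r} ⋯ B_{x₁}^{x₂} B_{x₀}^{x₁}. -/
noncomputable def bpathOp {k : ℕ} (B : ℤ → ℤ → Matrix (Fin k) (Fin k) ℂ)
    {a i : ℤ} (p : BPath a i) : Matrix (Fin k) (Fin k) ℂ :=
  (List.range p.r).foldl (fun M m => B (p.x m) (p.x (m + 1)) * M) 1

lemma psd_diag_nonneg {k : ℕ} {X : Matrix (Fin k) (Fin k) ℂ} (h : X.PosSemidef) (i : Fin k) :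
    0 ≤ X i i := by
  have := h.dotProduct_mulVec_nonneg (Pi.single i 1)
  simpa [dotProduct, Matrix.mulVec, Pi.single_apply, Finset.sum_ite_eq, Finset.sum_ite_eq'] using this

lemma psd_trace_nonneg {k : ℕ} {X : Matrix (Fin k) (Fin k) ℂ} (h : X.PosSemidef) :
    0 ≤ X.trace :=
  Finset.sum_nonneg fun i _ => psd_diag_nonneg h i

lemma psd_trace_eq {k : ℕ} {X : Matrix (Fin k) (Fin k) ℂ} (h : X.PosSemidef) :
    X.trace = ((X.trace.re : ℝ) : ℂ) := by
  have := psd_trace_nonneg h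
  rw [Complex.le_def] at this
  exact (Complex.ext (by simp) (by simp [this.2.symm])).symm

lemma psd_trace_re_nonneg {k : ℕ} {X : Matrix (Fin k) (Fin k) ℂ} (h : X.PosSemidef) :
    0 ≤ X.trace.re := by
  have := psd_trace_nonneg h
  rw [Complex.le_def] at this
  simpa using this.1

lemma psd_eq_zero_of_trace {k : ℕ} {X : Matrix (Fin k) (Fin k) ℂ} (h : X.PosSemidef)
    (ht : X.trace = 0) : X = 0 := by
  obtain ⟨C, rfl⟩ : ∃ C : Matrix (Fin k) (Fin k) ℂ, X = Cᴴ * C :=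
    ⟨0, by rw [h.trace_eq_zero_iff.mp ht]; simp⟩
  suffices hC : C = 0 by simp [hC]
  have : (Cᴴ * C).trace = ∑ j, ∑ i, (starRingEnd ℂ) (C i j) * C i j := by
    simp [Matrix.trace, Matrix.diag, Matrix.mul_apply, Matrix.conjTranspose_apply]
  rw [this] at ht
  have h2 : ∑ j, ∑ i, Complex.normSq (C i j) = 0 := by
    have := congrArg Complex.re ht
    simpa [Complex.mul_conj', Complex.normSq] using this
  ext i j
  have hnn : ∀ j' ∈ (Finset.univ : Finset (Fin k)), 0 ≤ ∑ i, Complex.normSq (C i j') :=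
    fun j' _ => Finset.sum_nonneg fun i' _ => Complex.normSq_nonneg _
  have h3 := (Finset.sum_eq_zero_iff_of_nonneg hnn).mp h2 j (Finset.mem_univ j)
  have h4 := (Finset.sum_eq_zero_iff_of_nonneg
    (fun i' _ => Complex.normSq_nonneg (C i' j))).mp h3 i (Finset.mem_univ i)
  simpa [Complex.normSq_eq_zero] using h4

lemma psd_smul_real {k : ℕ} {X : Matrix (Fin k) (Fin k) ℂ} (h : X.PosSemidef)
    {t : ℝ} (ht : 0 ≤ t) : (((t : ℂ)) • X).PosSemidef := by
  apply Matrix.PosSemidef.of_dotProduct_mulVec_nonneg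
  · unfold Matrix.IsHermitian
    rw [Matrix.conjTranspose_smul, h.1.eq]
    congr 1
    simp
  · intro v
    have := h.dotProduct_mulVec_nonneg v
    rw [Matrix.smul_mulVec, dotProduct_smul]
    have h0 : (0:ℂ) ≤ (t:ℂ) := by
      rw [Complex.le_def]; simp [ht]
    calc (0:ℂ) = (t:ℂ) * 0 := by ring
    _ ≤ (t:ℂ) * (star v ⬝ᵥ X *ᵥ v) := by
        exact mul_le_mul_of_nonneg_left this h0

lemma BPath.ext' {a i : ℤ} {p q : BPath a i} (h1 : p.r = q.r) (h2 : p.x = q.x) : p = q := by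
  cases p; cases q; simp_all

def bOne (a i : ℤ) (hi : -a < i ∧ i < a) (b : Bool) : BPath a i where
  r := 1
  x := fun m => if m = 0 then i else (if b then a else -a)
  hr := le_refl 1
  hx0 := rfl
  hmid := fun m hm => by
    have : m = 0 := by omega
    simpa [this] using hi
  hlast := by cases b <;> simp
  htail := fun m hm => by
    have : m ≠ 0 := by omega
    simp [this]

def bCons (a : ℤ) (i : ℤ) (hi : -a < i ∧ i < a) {j : ℤ} (q : BPath a j) : BPath a i where
  r := q.r + 1
  x := fun m => if m = 0 then i else q.x (m - 1)
  hr := by omega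
  hx0 := rfl
  hmid := fun m hm => by
    rcases Nat.eq_zero_or_pos m with h0 | h0
    · simpa [h0] using hi
    · have : m ≠ 0 := by omega
      simp only [this, if_false]
      exact q.hmid (m - 1) (by omega)
  hlast := by
    simp only [Nat.succ_ne_zero, if_false, Nat.add_sub_cancel]
    exact q.hlast
  htail := fun m hm => by
    have h1 : m ≠ 0 := by omega
    simp only [h1, Nat.succ_ne_zero, if_false, Nat.add_sub_cancel]
    exact q.htail (m - 1) (by omega)

def bTail {a i : ℤ} (p : BPath a i) (hp : 2 ≤ p.r) : BPath a (p.x 1) where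
  r := p.r - 1
  x := fun m => p.x (m + 1)
  hr := by omega
  hx0 := rfl
  hmid := fun m hm => p.hmid (m + 1) (by omega)
  hlast := by
    show p.x (p.r - 1 + 1) = -a ∨ p.x (p.r - 1 + 1) = a
    rw [show p.r - 1 + 1 = p.r by omega]; exact p.hlast
  htail := fun m hm => by
    show p.x (m + 1) = p.x (p.r - 1 + 1)
    rw [show p.r - 1 + 1 = p.r by omega]
    exact p.htail (m + 1) (by omega)

lemma bpath_r_one_cases {a i : ℤ} (p : BPath a i) (hp : p.r = 1) (hi : -a < i ∧ i < a)
    (hne : -a ≠ a) : p = bOne a i hi (decide (p.x 1 = a)) := by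
  apply BPath.ext'
  · simp [bOne, hp]
  · funext m
    rcases Nat.eq_zero_or_pos m with h0 | h0
    · simp [h0, bOne, p.hx0]
    · have h1 : m ≠ 0 := by omega
      have h2 : p.x m = p.x 1 := by
        rw [p.htail m (by omega), hp]
      rcases p.hlast with hl | hl <;> rw [hp] at hl
      · have : ¬ (p.x 1 = a) := by rw [hl]; exact hne
        simp [bOne, h1, h2, hl, this, if_neg hne]
      · simp [bOne, h1, h2, hl]

/-- decomposition of a path with r ≥ 2 -/
lemma bpath_cons_tail {a i : ℤ} (p : BPath a i) (hp : 2 ≤ p.r) (hi : -a < i ∧ i < a) :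
    p = bCons a i hi (bTail p hp) := by
  apply BPath.ext'
  · simp [bCons, bTail]; omega
  · funext m
    rcases Nat.eq_zero_or_pos m with h0 | h0
    · simp [h0, bCons, p.hx0]
    · have h1 : m ≠ 0 := by omega
      simp only [bCons, bTail, h1, if_false]
      congr 1
      omega

noncomputable section

def bEquivOne {a i : ℤ} (hi : -a < i ∧ i < a) (hne : -a ≠ a) :
    {p : BPath a i // p.r = 1} ≃ Bool where
  toFun p := decide (p.1.x 1 = a)
  invFun b := ⟨bOne a i hi b, rfl⟩
  left_inv p := Subtype.ext (bpath_r_one_cases p.1 p.2 hi hne).symm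
  right_inv b := by
    cases b
    · simp [bOne, hne]
    · simp [bOne]

lemma bSigmaExt {a : ℤ} {j j' : ℤ} {hj : j ∈ Finset.Ioo (-a) a} {hj' : j' ∈ Finset.Ioo (-a) a}
    {q : BPath a j} {q' : BPath a j'} (h : j = j') (hr : q.r = q'.r) (hx : q.x = q'.x) :
    (⟨⟨j, hj⟩, q⟩ : Σ z : ↥(Finset.Ioo (-a) a), BPath a (z : ℤ)) = ⟨⟨j', hj'⟩, q'⟩ := by
  subst h
  congr 1
  exact BPath.ext' hr hx

def bEquivCons {a i : ℤ} (hi : -a < i ∧ i < a) :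
    {p : BPath a i // ¬ p.r = 1} ≃ (Σ j : ↥(Finset.Ioo (-a) a), BPath a (j : ℤ)) where
  toFun p := ⟨⟨p.1.x 1, Finset.mem_Ioo.mpr (p.1.hmid 1 (by have := p.1.hr; omega))⟩,
    bTail p.1 (by have := p.1.hr; omega)⟩
  invFun jq := ⟨bCons a i hi jq.2, by have := jq.2.hr; simp [bCons]; omega⟩
  left_inv p := Subtype.ext (bpath_cons_tail p.1 (by have := p.1.hr; omega) hi).symm
  right_inv := by
    rintro ⟨⟨j, hj⟩, q⟩
    apply bSigmaExt
    · exact q.hx0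
    · simp [bTail, bCons]
    · funext m
      simp [bTail, bCons]

lemma tsum_bpath_decomp {a i : ℤ} (hi : -a < i ∧ i < a) (hne : -a ≠ a)
    (f : BPath a i → ENNReal) :
    ∑' p, f p = (f (bOne a i hi false) + f (bOne a i hi true))
      + ∑' (jq : Σ j : ↥(Finset.Ioo (-a) a), BPath a (j : ℤ)), f (bCons a i hi jq.2) := by
  rw [← Summable.tsum_add_tsum_compl (s := {p : BPath a i | p.r = 1})
    ENNReal.summable ENNReal.summable]
  congr 1
  · show ∑' (p : {p : BPath a i // p.r = 1}), f p.1 = _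
    rw [← Equiv.tsum_eq (bEquivOne hi hne).symm (fun p => f p.1)]
    rw [tsum_bool]
    rfl
  · show ∑' (p : {p : BPath a i // ¬ p.r = 1}), f p.1 = _
    rw [← Equiv.tsum_eq (bEquivCons hi).symm (fun p => f p.1)]
    apply tsum_congr
    intro jq
    rfl
section
variable {α : Type*} [Monoid α]

lemma foldl_mul_init (s : ℕ → α) (l : List ℕ) (A : α) :
    l.foldl (fun M m => s m * M) A = l.foldl (fun M m => s m * M) 1 * A := by
  induction l generalizing A with
  | nil => simp
  | cons m l ih =>
    simp only [List.foldl_cons]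
    rw [ih (s m * A), ih (s m * 1)]
    simp [mul_assoc]

end

lemma bpathOp_one {k : ℕ} (B : ℤ → ℤ → Matrix (Fin k) (Fin k) ℂ) {a i : ℤ}
    (hi : -a < i ∧ i < a) (b : Bool) :
    bpathOp B (bOne a i hi b) = B i (if b then a else -a) := by
  simp [bpathOp, bOne, List.range_succ]

lemma bpathOp_cons {k : ℕ} (B : ℤ → ℤ → Matrix (Fin k) (Fin k) ℂ) {a i j : ℤ}
    (hi : -a < i ∧ i < a) (q : BPath a j) :
    bpathOp B (bCons a i hi q) = bpathOp B q * B i j := by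
  unfold bpathOp
  show (List.range (q.r + 1)).foldl _ 1 = _
  rw [List.range_succ_eq_map, List.foldl_cons, List.foldl_map]
  have hfun : (fun (M : Matrix (Fin k) (Fin k) ℂ) (m : ℕ) =>
      B ((bCons a i hi q).x m.succ) ((bCons a i hi q).x (m.succ + 1)) * M)
      = fun M m => B (q.x m) (q.x (m + 1)) * M := by
    funext M m
    simp [bCons]
  have hinit : B ((bCons a i hi q).x 0) ((bCons a i hi q).x 1) * 1
      = B i j * (1 : Matrix (Fin k) (Fin k) ℂ) := by
    have h1 : (bCons a i hi q).x 1 = q.x 0 := by simp [bCons]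
    rw [show (bCons a i hi q).x 0 = i from rfl, h1, q.hx0]
  rw [hfun, hinit, foldl_mul_init, mul_one]

variable {k : ℕ}

/-- iterated interior trace mass -/
def sumT (B : ℤ → ℤ → Matrix (Fin k) (Fin k) ℂ) (a : ℤ) :
    ℕ → ℤ → Matrix (Fin k) (Fin k) ℂ → ℝ
  | 0, _, X => (Matrix.trace X).re
  | n + 1, i, X => ∑ j ∈ Finset.Ioo (-a) a, sumT B a n j (B i j * X * (B i j)ᴴ)

/-- iterated application of the difference functional -/
def sumG (B : ℤ → ℤ → Matrix (Fin k) (Fin k) ℂ) (a : ℤ)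
    (g : ℤ → (Matrix (Fin k) (Fin k) ℂ →ₗ[ℂ] ℂ)) :
    ℕ → ℤ → Matrix (Fin k) (Fin k) ℂ → ℂ
  | 0, i, X => g i X
  | n + 1, i, X => ∑ j ∈ Finset.Ioo (-a) a, sumG B a g n j (B i j * X * (B i j)ᴴ)

lemma sumT_nonneg (B : ℤ → ℤ → Matrix (Fin k) (Fin k) ℂ) (a : ℤ) :
    ∀ (n : ℕ) (i : ℤ) (X : Matrix (Fin k) (Fin k) ℂ), X.PosSemidef → 0 ≤ sumT B a n i X := by
  intro n
  induction n with
  | zero => intro i X hX; exact psd_trace_re_nonneg hX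
  | succ n ih =>
    intro i X hX
    exact Finset.sum_nonneg fun j _ => ih j _ (hX.mul_mul_conjTranspose_same (B i j))

lemma trace_conserved (B : ℤ → ℤ → Matrix (Fin k) (Fin k) ℂ) (a : ℤ)
    (hunit : ∀ i, ∑ᶠ j : ℤ, (B i j)ᴴ * B i j = 1)
    (hzero : ∀ i j : ℤ, -a < i → i < a → (j < -a ∨ a < j) → B i j = 0)
    (i : ℤ) (hi : -a < i ∧ i < a) (X : Matrix (Fin k) (Fin k) ℂ) :
    ∑ j ∈ Finset.Icc (-a) a, (B i j * X * (B i j)ᴴ).trace = X.trace := by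
  have h1 : ∀ j : ℤ, (B i j * X * (B i j)ᴴ).trace = ((B i j)ᴴ * B i j * X).trace := by
    intro j
    rw [Matrix.trace_mul_cycle]
  simp only [h1]
  have h2 : ∑ j ∈ Finset.Icc (-a) a, ((B i j)ᴴ * B i j * X).trace
      = ((∑ j ∈ Finset.Icc (-a) a, (B i j)ᴴ * B i j) * X).trace := by
    rw [Finset.sum_mul, Matrix.trace_sum]
  rw [h2]
  have h3 : ∑ j ∈ Finset.Icc (-a) a, (B i j)ᴴ * B i j = 1 := by
    rw [← finsum_eq_finset_sum_of_support_subset (fun j => (B i j)ᴴ * B i j)]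
    · exact hunit i
    · intro j hj
      simp only [Function.mem_support, Finset.coe_Icc, Set.mem_Icc] at hj ⊢
      by_contra hc
      have : j < -a ∨ a < j := by omega
      exact hj (by rw [hzero i j hi.1 hi.2 this]; simp)
  rw [h3, one_mul]

lemma icc_split {M : Type*} [AddCommMonoid M] (a : ℤ) (ha : 1 ≤ a) (h : ℤ → M) :
    ∑ j ∈ Finset.Icc (-a) a, h j
      = h (-a) + h a + ∑ j ∈ Finset.Ioo (-a) a, h j := by
  have hs : Finset.Icc (-a) a = insert (-a) (insert a (Finset.Ioo (-a) a)) := by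
    ext j
    simp only [Finset.mem_Icc, Finset.mem_insert, Finset.mem_Ioo]
    omega
  rw [hs, Finset.sum_insert, Finset.sum_insert]
  · abel
  · simp only [Finset.mem_Ioo]; omega
  · simp only [Finset.mem_insert, Finset.mem_Ioo]; omega

noncomputable def eTr (X : Matrix (Fin k) (Fin k) ℂ) : ENNReal :=
  ENNReal.ofReal (X.trace.re)

noncomputable def exProb (B : ℤ → ℤ → Matrix (Fin k) (Fin k) ℂ) (a : ℤ)
    (n : ℕ) (i : ℤ) (X : Matrix (Fin k) (Fin k) ℂ) : ENNReal :=
  ∑' p : BPath a i, if p.r ≤ n then eTr (bpathOp B p * X * (bpathOp B p)ᴴ) else 0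

lemma key_identity (B : ℤ → ℤ → Matrix (Fin k) (Fin k) ℂ) (a : ℤ) (ha : 1 ≤ a)
    (hunit : ∀ i, ∑ᶠ j : ℤ, (B i j)ᴴ * B i j = 1)
    (hzero : ∀ i j : ℤ, -a < i → i < a → (j < -a ∨ a < j) → B i j = 0) :
    ∀ (n : ℕ) (i : ℤ) (hi : -a < i ∧ i < a) (X : Matrix (Fin k) (Fin k) ℂ),
      X.PosSemidef →
      exProb B a n i X + ENNReal.ofReal (sumT B a n i X) = eTr X := by
  have hne : -a ≠ a := by omega
  intro n
  induction n with
  | zero =>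
    intro i hi X hX
    have h1 : exProb B a 0 i X = 0 := by
      unfold exProb
      rw [ENNReal.summable.tsum_eq_zero_iff]
      intro p
      have := p.hr
      simp only [Nat.le_zero]
      rw [if_neg (by omega)]
    rw [h1, zero_add]
    rfl
  | succ n ih =>
    intro i hi X hX
    set f : BPath a i → ENNReal :=
      fun p => if p.r ≤ n + 1 then eTr (bpathOp B p * X * (bpathOp B p)ᴴ) else 0 with hf
    have hdec := tsum_bpath_decomp hi hne f
    have hone : ∀ b : Bool, f (bOne a i hi b) =
        eTr (B i (if b then a else -a) * X * (B i (if b then a else -a))ᴴ) := by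
      intro b
      rw [hf]
      show (if (bOne a i hi b).r ≤ n + 1
        then eTr (bpathOp B (bOne a i hi b) * X * (bpathOp B (bOne a i hi b))ᴴ) else 0) = _
      rw [if_pos (show (bOne a i hi b).r ≤ n + 1 from by show 1 ≤ n + 1; omega),
        bpathOp_one]
    have hsig : ∀ jq : Σ j : ↥(Finset.Ioo (-a) a), BPath a (j : ℤ),
        f (bCons a i hi jq.2) =
          (if jq.2.r ≤ n
            then eTr (bpathOp B jq.2 * (B i jq.1 * X * (B i jq.1)ᴴ) * (bpathOp B jq.2)ᴴ)
            else 0) := by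
      rintro ⟨⟨j, hj⟩, q⟩
      simp only [hf]
      have hr : (bCons a i hi q).r = q.r + 1 := rfl
      have hop : bpathOp B (bCons a i hi q) = bpathOp B q * B i j := bpathOp_cons B hi q
      by_cases hq : q.r ≤ n
      · rw [if_pos (by rw [hr]; omega), if_pos hq, hop]
        congr 1
        rw [Matrix.conjTranspose_mul]
        noncomm_ring
      · rw [if_neg (by rw [hr]; omega), if_neg hq]
    have hsum : exProb B a (n+1) i X
        = eTr (B i (-a) * X * (B i (-a))ᴴ) + eTr (B i a * X * (B i a)ᴴ)
          + ∑ j ∈ Finset.Ioo (-a) a, exProb B a n j (B i j * X * (B i j)ᴴ) := by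
      show ∑' p, f p = _
      have honeF : f (bOne a i hi false) = eTr (B i (-a) * X * (B i (-a))ᴴ) := by
        rw [hone false]; simp
      have honeT : f (bOne a i hi true) = eTr (B i a * X * (B i a)ᴴ) := by
        rw [hone true]; simp
      rw [hdec, honeF, honeT]
      congr 1
      rw [tsum_congr hsig]
      rw [ENNReal.tsum_sigma (f := fun (j : ↥(Finset.Ioo (-a) a)) (q : BPath a (j : ℤ)) =>
        if q.r ≤ n then eTr (bpathOp B q * (B i (j : ℤ) * X * (B i (j : ℤ))ᴴ) * (bpathOp B q)ᴴ)
        else 0)]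
      have h4 : ∀ j : ↥(Finset.Ioo (-a) a),
          (∑' (q : BPath a (j : ℤ)), if q.r ≤ n
            then eTr (bpathOp B q * (B i (j : ℤ) * X * (B i (j : ℤ))ᴴ) * (bpathOp B q)ᴴ)
            else 0)
          = exProb B a n (j : ℤ) (B i (j : ℤ) * X * (B i (j : ℤ))ᴴ) := fun j => rfl
      rw [tsum_congr h4]
      exact Finset.tsum_subtype (Finset.Ioo (-a) a)
        (fun z => exProb B a n z (B i z * X * (B i z)ᴴ))
    have hsT : ENNReal.ofReal (sumT B a (n+1) i X)
        = ∑ j ∈ Finset.Ioo (-a) a, ENNReal.ofReal (sumT B a n j (B i j * X * (B i j)ᴴ)) := by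
      show ENNReal.ofReal (∑ j ∈ Finset.Ioo (-a) a, sumT B a n j (B i j * X * (B i j)ᴴ)) = _
      exact ENNReal.ofReal_sum_of_nonneg fun j _ =>
        sumT_nonneg B a n j _ (hX.mul_mul_conjTranspose_same (B i j))
    rw [hsum, hsT, add_assoc, add_assoc, ← Finset.sum_add_distrib]
    have hIH : ∑ j ∈ Finset.Ioo (-a) a,
        (exProb B a n j (B i j * X * (B i j)ᴴ)
          + ENNReal.ofReal (sumT B a n j (B i j * X * (B i j)ᴴ)))
        = ∑ j ∈ Finset.Ioo (-a) a, eTr (B i j * X * (B i j)ᴴ) := by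
      apply Finset.sum_congr rfl
      intro j hj
      rw [Finset.mem_Ioo] at hj
      exact ih j hj _ (hX.mul_mul_conjTranspose_same (B i j))
    rw [hIH]
    rw [← add_assoc]
    rw [← icc_split a ha (fun j => eTr (B i j * X * (B i j)ᴴ))]
    unfold eTr
    rw [← ENNReal.ofReal_sum_of_nonneg (fun j _ =>
      psd_trace_re_nonneg (hX.mul_mul_conjTranspose_same (B i j)))]
    congr 1
    rw [← Complex.re_sum]
    rw [trace_conserved B a hunit hzero i hi X]

lemma sumT_tendsto_zero (B : ℤ → ℤ → Matrix (Fin k) (Fin k) ℂ) (a : ℤ) (ha : 1 ≤ a)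
    (hunit : ∀ i, ∑ᶠ j : ℤ, (B i j)ᴴ * B i j = 1)
    (hzero : ∀ i j : ℤ, -a < i → i < a → (j < -a ∨ a < j) → B i j = 0)
    (i : ℤ) (hi : -a < i ∧ i < a) (ρ : Matrix (Fin k) (Fin k) ℂ)
    (hρ : ρ.PosSemidef) (htr : Matrix.trace ρ = 1)
    (htsum : (∑' p : BPath a i, (Matrix.trace (bpathOp B p * ρ * (bpathOp B p)ᴴ)).re) = 1) :
    Filter.Tendsto (fun n => sumT B a n i ρ) Filter.atTop (nhds 0) := by
  set e : BPath a i → ENNReal :=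
    fun p => eTr (bpathOp B p * ρ * (bpathOp B p)ᴴ) with he
  have hnn : ∀ p : BPath a i, 0 ≤ (Matrix.trace (bpathOp B p * ρ * (bpathOp B p)ᴴ)).re :=
    fun p => psd_trace_re_nonneg (hρ.mul_mul_conjTranspose_same _)
  have hsummable : Summable (fun p : BPath a i =>
      (Matrix.trace (bpathOp B p * ρ * (bpathOp B p)ᴴ)).re) := by
    by_contra hs
    rw [tsum_eq_zero_of_not_summable hs] at htsum
    norm_num at htsum
  have hetsum : ∑' p, e p = 1 := by
    rw [he]
    unfold eTr
    rw [← ENNReal.ofReal_tsum_of_nonneg hnn hsummable, htsum, ENNReal.ofReal_one]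
  have hEXmono : Monotone (fun n => exProb B a n i ρ) := by
    intro n m h
    apply ENNReal.tsum_le_tsum
    intro p
    by_cases hp : p.r ≤ n
    · rw [if_pos hp, if_pos (le_trans hp h)]
    · rw [if_neg hp]
      exact zero_le
  have hEXle : ∀ n, exProb B a n i ρ ≤ 1 := by
    intro n
    rw [← hetsum]
    apply ENNReal.tsum_le_tsum
    intro p
    by_cases hp : p.r ≤ n
    · rw [if_pos hp]
    · rw [if_neg hp]; exact zero_le
  have hEXsup : (⨆ n, exProb B a n i ρ) = 1 := by
    apply le_antisymm
    · exact iSup_le hEXle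
    · rw [← hetsum, ENNReal.tsum_eq_iSup_sum]
      apply iSup_le
      intro s
      have hn : ∀ p ∈ s, p.r ≤ s.sup (fun p => p.r) := fun p hp => Finset.le_sup hp
      calc ∑ p ∈ s, e p = ∑ p ∈ s, (if p.r ≤ s.sup (fun p => p.r) then e p else 0) := by
            apply Finset.sum_congr rfl
            intro p hp
            rw [if_pos (hn p hp)]
        _ ≤ exProb B a (s.sup (fun p => p.r)) i ρ := ENNReal.sum_le_tsum s
        _ ≤ ⨆ n, exProb B a n i ρ := le_iSup (fun n => exProb B a n i ρ) _
  have heTrρ : eTr ρ = 1 := by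
    unfold eTr
    rw [htr]
    simp
  have hkey : ∀ n, exProb B a n i ρ + ENNReal.ofReal (sumT B a n i ρ) = 1 := by
    intro n
    rw [key_identity B a ha hunit hzero n i hi ρ hρ, heTrρ]
  have hST : ∀ n, ENNReal.ofReal (sumT B a n i ρ) = 1 - exProb B a n i ρ := by
    intro n
    have := hkey n
    rw [add_comm] at this
    exact ENNReal.eq_sub_of_add_eq (ne_top_of_le_ne_top ENNReal.one_ne_top (hEXle n)) this
  have hanti : Antitone (fun n => ENNReal.ofReal (sumT B a n i ρ)) := by
    intro n m h
    show ENNReal.ofReal (sumT B a m i ρ) ≤ ENNReal.ofReal (sumT B a n i ρ)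
    rw [hST, hST]
    exact tsub_le_tsub_left (hEXmono h) 1
  have hinf : (⨅ n, ENNReal.ofReal (sumT B a n i ρ)) = 0 := by
    have : (⨅ n, ENNReal.ofReal (sumT B a n i ρ)) = ⨅ n, 1 - exProb B a n i ρ := by
      exact iInf_congr hST
    rw [this, ← ENNReal.sub_iSup ENNReal.one_ne_top, hEXsup, tsub_self]
  have htd : Filter.Tendsto (fun n => ENNReal.ofReal (sumT B a n i ρ)) Filter.atTop (nhds 0) := by
    rw [← hinf]
    exact tendsto_atTop_iInf hanti
  have htd2 := (ENNReal.tendsto_toReal (a := 0) (by simp)).comp htd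
  have heq : (fun n => (ENNReal.ofReal (sumT B a n i ρ)).toReal) = fun n => sumT B a n i ρ := by
    funext n
    rw [ENNReal.toReal_ofReal (sumT_nonneg B a n i ρ hρ)]
  rw [show (0 : ENNReal).toReal = (0 : ℝ) by simp] at htd2
  rw [← heq]
  exact htd2

lemma sumG_bound (B : ℤ → ℤ → Matrix (Fin k) (Fin k) ℂ) (a : ℤ)
    (g : ℤ → (Matrix (Fin k) (Fin k) ℂ →ₗ[ℂ] ℂ)) (K : ℝ) (hK : 0 ≤ K)
    (hgK : ∀ i ∈ Finset.Icc (-a) a, ∀ ρ : Matrix (Fin k) (Fin k) ℂ,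
      ρ.PosSemidef → Matrix.trace ρ = 1 → ‖g i ρ‖ ≤ K) :
    ∀ (n : ℕ) (i : ℤ), i ∈ Finset.Icc (-a) a → ∀ X : Matrix (Fin k) (Fin k) ℂ,
      X.PosSemidef → ‖sumG B a g n i X‖ ≤ K * sumT B a n i X := by
  intro n
  induction n with
  | zero =>
    intro i hi X hX
    show ‖g i X‖ ≤ K * (Matrix.trace X).re
    set t : ℝ := (Matrix.trace X).re with htdef
    have ht0 : 0 ≤ t := psd_trace_re_nonneg hX
    by_cases hXz : X = 0
    · subst hXz
      simp [htdef]
    · have htpos : 0 < t := by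
        rcases lt_or_eq_of_le ht0 with h | h
        · exact h
        · exfalso
          apply hXz
          apply psd_eq_zero_of_trace hX
          rw [psd_trace_eq hX, ← htdef, ← h]
          simp
      set ρ : Matrix (Fin k) (Fin k) ℂ := ((t⁻¹ : ℝ) : ℂ) • X with hρdef
      have hρpsd : ρ.PosSemidef := psd_smul_real hX (inv_nonneg.mpr ht0)
      have hρtr : Matrix.trace ρ = 1 := by
        rw [hρdef, Matrix.trace_smul, smul_eq_mul, psd_trace_eq hX, ← htdef]
        rw [← Complex.ofReal_mul, inv_mul_cancel₀ (ne_of_gt htpos)]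
        simp
      have hXρ : X = ((t : ℝ) : ℂ) • ρ := by
        rw [hρdef, smul_smul, ← Complex.ofReal_mul, mul_inv_cancel₀ (ne_of_gt htpos)]
        simp
      calc ‖g i X‖ = ‖g i (((t : ℝ) : ℂ) • ρ)‖ := by rw [← hXρ]
        _ = ‖((t : ℝ) : ℂ) * g i ρ‖ := by rw [_root_.map_smul]; rfl
        _ = t * ‖g i ρ‖ := by
            rw [norm_mul, Complex.norm_real, Real.norm_of_nonneg ht0]
        _ ≤ t * K := mul_le_mul_of_nonneg_left (hgK i hi ρ hρpsd hρtr) ht0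
        _ = K * t := mul_comm _ _
  | succ n ih =>
    intro i hi X hX
    show ‖∑ j ∈ Finset.Ioo (-a) a, sumG B a g n j (B i j * X * (B i j)ᴴ)‖
      ≤ K * ∑ j ∈ Finset.Ioo (-a) a, sumT B a n j (B i j * X * (B i j)ᴴ)
    calc ‖∑ j ∈ Finset.Ioo (-a) a, sumG B a g n j (B i j * X * (B i j)ᴴ)‖
        ≤ ∑ j ∈ Finset.Ioo (-a) a, ‖sumG B a g n j (B i j * X * (B i j)ᴴ)‖ :=
          norm_sum_le _ _
      _ ≤ ∑ j ∈ Finset.Ioo (-a) a, K * sumT B a n j (B i j * X * (B i j)ᴴ) := by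
          apply Finset.sum_le_sum
          intro j hj
          rw [Finset.mem_Ioo] at hj
          exact ih j (Finset.mem_Icc.mpr ⟨by omega, by omega⟩) _
            (hX.mul_mul_conjTranspose_same (B i j))
      _ = K * ∑ j ∈ Finset.Ioo (-a) a, sumT B a n j (B i j * X * (B i j)ᴴ) := by
          rw [Finset.mul_sum]

lemma sumG_unroll (B : ℤ → ℤ → Matrix (Fin k) (Fin k) ℂ) (a : ℤ)
    (g : ℤ → (Matrix (Fin k) (Fin k) ℂ →ₗ[ℂ] ℂ))
    (hvanish : ∀ j : ℤ, (j = -a ∨ j = a) → ∀ X : Matrix (Fin k) (Fin k) ℂ,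
      X.PosSemidef → g j X = 0)
    (hrec : ∀ i : ℤ, -a < i → i < a → ∀ X : Matrix (Fin k) (Fin k) ℂ, X.PosSemidef →
      g i X = ∑ j ∈ Finset.Icc (-a) a, g j (B i j * X * (B i j)ᴴ)) :
    ∀ (n : ℕ) (i : ℤ), -a < i → i < a → ∀ X : Matrix (Fin k) (Fin k) ℂ,
      X.PosSemidef → g i X = sumG B a g n i X := by
  intro n
  induction n with
  | zero => intro i h1 h2 X hX; rfl
  | succ n ih =>
    intro i h1 h2 X hX
    rw [hrec i h1 h2 X hX]
    show _ = ∑ j ∈ Finset.Ioo (-a) a, sumG B a g n j (B i j * X * (B i j)ᴴ)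
    rw [← Finset.sum_subset (Finset.Ioo_subset_Icc_self)
      (fun x hx hx2 => by
        rw [Finset.mem_Icc] at hx
        rw [Finset.mem_Ioo] at hx2
        exact hvanish x (by omega) _ (hX.mul_mul_conjTranspose_same (B i x)))]
    apply Finset.sum_congr rfl
    intro j hj
    rw [Finset.mem_Ioo] at hj
    exact ih j hj.1 hj.2 _ (hX.mul_mul_conjTranspose_same (B i j))

/-- uniqueness of bounded solutions of the boundary value problem.
Assume hitting the boundary is certain (for every i ∈ D and density ρ, the total
first-passage probability ∑_C tr(C ρ C*) is 1). If ψ and ψ' are families of linear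
functionals satisfying ψ_j(X) = f(j)·tr(X) on ∂D and
ψ_i(X) = c(i)·tr(X) + ∑_{j∈D∪∂D} ψ_j(B_i^j X (B_i^j)*) on D (for positive
semidefinite X), and both are bounded on density matrices, then ψ = ψ' on densities. -/
theorem boundary_value_problem_unique (k : ℕ) (hk : 1 ≤ k)
    (B : ℤ → ℤ → Matrix (Fin k) (Fin k) ℂ)
    (hfin : ∀ i, {j : ℤ | B i j ≠ 0}.Finite)
    (hunit : ∀ i, ∑ᶠ j : ℤ, (B i j)ᴴ * B i j = 1)
    (a : ℤ) (ha : 1 ≤ a)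
    (hzero : ∀ i j : ℤ, -a < i → i < a → (j < -a ∨ a < j) → B i j = 0)
    (c f : ℤ → ℝ)
    (hc : ∀ i : ℤ, -a < i → i < a → 0 ≤ c i)
    (hf : 0 ≤ f (-a) ∧ 0 ≤ f a)
    (hcertain : ∀ i : ℤ, -a < i → i < a →
      ∀ ρ : Matrix (Fin k) (Fin k) ℂ, ρ.PosSemidef → Matrix.trace ρ = 1 →
        (∑' p : BPath a i, (Matrix.trace (bpathOp B p * ρ * (bpathOp B p)ᴴ)).re) = 1)
    (ψ ψ' : ℤ → (Matrix (Fin k) (Fin k) ℂ →ₗ[ℂ] ℂ))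
    (hbdry : ∀ j : ℤ, (j = -a ∨ j = a) → ∀ X : Matrix (Fin k) (Fin k) ℂ,
      X.PosSemidef →
        ψ j X = ((f j : ℝ) : ℂ) * Matrix.trace X ∧
        ψ' j X = ((f j : ℝ) : ℂ) * Matrix.trace X)
    (hint : ∀ i : ℤ, -a < i → i < a → ∀ X : Matrix (Fin k) (Fin k) ℂ,
      X.PosSemidef →
        ψ i X = ((c i : ℝ) : ℂ) * Matrix.trace X
            + ∑ j ∈ Finset.Icc (-a) a, ψ j (B i j * X * (B i j)ᴴ) ∧
        ψ' i X = ((c i : ℝ) : ℂ) * Matrix.trace X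
            + ∑ j ∈ Finset.Icc (-a) a, ψ' j (B i j * X * (B i j)ᴴ))
    (hbound : ∃ M : ℝ, ∀ i ∈ Finset.Icc (-a) a,
      ∀ ρ : Matrix (Fin k) (Fin k) ℂ, ρ.PosSemidef → Matrix.trace ρ = 1 →
        ‖ψ i ρ‖ ≤ M ∧ ‖ψ' i ρ‖ ≤ M) :
    ∀ i ∈ Finset.Icc (-a) a,
      ∀ ρ : Matrix (Fin k) (Fin k) ℂ, ρ.PosSemidef → Matrix.trace ρ = 1 →
        ψ i ρ = ψ' i ρ := by
  intro i hi ρ hρ htr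
  rw [Finset.mem_Icc] at hi
  by_cases hib : -a < i ∧ i < a
  case neg =>
    have : i = -a ∨ i = a := by omega
    obtain ⟨h1, h2⟩ := hbdry i this ρ hρ
    rw [h1, h2]
  case pos =>
    set g : ℤ → (Matrix (Fin k) (Fin k) ℂ →ₗ[ℂ] ℂ) := fun j => ψ j - ψ' j with hg
    have hgapp : ∀ j X, g j X = ψ j X - ψ' j X := fun j X => rfl
    have hvanish : ∀ j : ℤ, (j = -a ∨ j = a) → ∀ X : Matrix (Fin k) (Fin k) ℂ,
        X.PosSemidef → g j X = 0 := by
      intro j hj X hX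
      obtain ⟨h1, h2⟩ := hbdry j hj X hX
      rw [hgapp, h1, h2, sub_self]
    have hrec : ∀ i : ℤ, -a < i → i < a → ∀ X : Matrix (Fin k) (Fin k) ℂ, X.PosSemidef →
        g i X = ∑ j ∈ Finset.Icc (-a) a, g j (B i j * X * (B i j)ᴴ) := by
      intro i h1 h2 X hX
      obtain ⟨e1, e2⟩ := hint i h1 h2 X hX
      rw [hgapp, e1, e2]
      have : ∑ j ∈ Finset.Icc (-a) a, g j (B i j * X * (B i j)ᴴ)
          = ∑ j ∈ Finset.Icc (-a) a, (ψ j (B i j * X * (B i j)ᴴ)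
              - ψ' j (B i j * X * (B i j)ᴴ)) := by
        apply Finset.sum_congr rfl
        intro j _
        rw [hgapp]
      rw [this, Finset.sum_sub_distrib]
      ring
    obtain ⟨M, hM⟩ := hbound
    set K : ℝ := 2 * max M 0 with hKdef
    have hK : 0 ≤ K := by positivity
    have hgK : ∀ i ∈ Finset.Icc (-a) a, ∀ ρ : Matrix (Fin k) (Fin k) ℂ,
        ρ.PosSemidef → Matrix.trace ρ = 1 → ‖g i ρ‖ ≤ K := by
      intro i hi ρ hρ htr
      obtain ⟨h1, h2⟩ := hM i hi ρ hρ htr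
      rw [hgapp]
      calc ‖ψ i ρ - ψ' i ρ‖
          ≤ ‖ψ i ρ‖ + ‖ψ' i ρ‖ := by
            rw [sub_eq_add_neg]
            refine le_trans (norm_add_le _ _) ?_
            rw [norm_neg]
        _ ≤ max M 0 + max M 0 := add_le_add
            (le_trans h1 (le_max_left _ _)) (le_trans h2 (le_max_left _ _))
        _ = K := by rw [hKdef]; ring
    have hbd : ∀ n : ℕ, ‖g i ρ‖ ≤ K * sumT B a n i ρ := by
      intro n
      rw [sumG_unroll B a g hvanish hrec n i hib.1 hib.2 ρ hρ]
      exact sumG_bound B a g K hK hgK n i (Finset.mem_Icc.mpr ⟨by omega, by omega⟩) ρ hρ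
    have htd : Filter.Tendsto (fun n => K * sumT B a n i ρ) Filter.atTop (nhds 0) := by
      have := sumT_tendsto_zero B a ha hunit hzero i hib ρ hρ htr
        (hcertain i hib.1 hib.2 ρ hρ htr)
      have h2 := this.const_mul K
      simpa using h2
    have habs : ‖g i ρ‖ ≤ 0 := ge_of_tendsto' htd hbd
    have : g i ρ = 0 := by
      have := le_antisymm habs (norm_nonneg _)
      exact norm_eq_zero.mp this
    rw [hgapp] at this
    exact sub_eq_zero.mp this
end
end

section
/- Let B, C be k×k complex normal matrices with BC = CB and B*B + C*C = I. Let Φ be the nearest-neighbour open quantum random walk on ℤ acting on finitely supported families ρ = (ρ_i)_{i∈ℤ} of k×k matrices by Φ(ρ)_i = B ρ_{i+1} B* + C ρ_{i−1} C* (B is the left-step matrix, C the right-step matrix). Fix a ∈ ℤ, a density matrix ρ_a, and let ρ be the family supported at site a with value ρ_a. Then for every n ≥ 0 and x ∈ ℤ, the probability p_x^{(n)} = tr( (Φ^n ρ)_x ) of finding the walk at site x at time n satisfies: p_x^{(n)} = binom(n, (n+x−a)/2) · tr( (B*B)^{(n−x+a)/2} (C*C)^{(n+x−a)/2} ρ_a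 ) if n + x − a is even and |x − a| ≤ n, and p_x^{(n)} = 0 otherwise. -/
open Matrix ComplexOrder

lemma OQRW_iterate_formula {k : ℕ} (B C : Matrix (Fin k) (Fin k) ℂ)
    (hBC : B * C = C * B)
    (Φ : (ℤ → Matrix (Fin k) (Fin k) ℂ) → (ℤ → Matrix (Fin k) (Fin k) ℂ))
    (hΦ : ∀ σ (i : ℤ), Φ σ i = B * σ (i + 1) * Bᴴ + C * σ (i - 1) * Cᴴ)
    (ρ : ℤ → Matrix (Fin k) (Fin k) ℂ) :
    ∀ (n : ℕ) (x : ℤ), Φ^[n] ρ x =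
      ∑ m ∈ Finset.range (n+1), (n.choose m : ℂ) •
        (B ^ m * C ^ (n - m) * ρ (x + 2*(m:ℤ) - n) * (B ^ m * C ^ (n - m))ᴴ) := by
  intro n
  induction n with
  | zero => intro x; simp
  | succ n ih =>
    intro x
    rw [Function.iterate_succ_apply', hΦ, ih, ih]
    have hsum : ∀ (f : ℕ → Matrix (Fin k) (Fin k) ℂ),
        ∑ m ∈ Finset.range (n+2), ((n+1).choose m : ℂ) • f m
          = (∑ m ∈ Finset.range (n+1), (n.choose m : ℂ) • f (m+1))
            + ∑ m ∈ Finset.range (n+1), (n.choose m : ℂ) • f m := by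
      intro f
      rw [Finset.sum_range_succ' (fun m => ((n+1).choose m : ℂ) • f m) (n+1)]
      simp only [Nat.choose_succ_succ, Nat.cast_add, add_smul, Finset.sum_add_distrib,
        Nat.choose_zero_right, Nat.cast_one, one_smul]
      rw [add_assoc]
      congr 1
      have h0 : f 0 = (n.choose 0 : ℂ) • f 0 := by simp
      rw [h0, ← Finset.sum_range_succ' (fun m => (n.choose m : ℂ) • f m) (n+1),
        Finset.sum_range_succ]
      simp
    rw [hsum]
    congr 1
    · rw [Finset.mul_sum, Finset.sum_mul]
      refine Finset.sum_congr rfl fun m hm => ?_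
      rw [Finset.mem_range, Nat.lt_succ_iff] at hm
      rw [mul_smul_comm, smul_mul_assoc]
      congr 1
      have h1 : n + 1 - (m + 1) = n - m := by omega
      have h2 : x + 2*((m:ℤ)+1) - ((n:ℤ)+1) = x + 1 + 2*(m:ℤ) - (n:ℤ) := by ring
      push_cast [h1]
      rw [h2]
      simp [pow_succ', conjTranspose_mul, mul_assoc]
    · rw [Finset.mul_sum, Finset.sum_mul]
      refine Finset.sum_congr rfl fun m hm => ?_
      rw [Finset.mem_range, Nat.lt_succ_iff] at hm
      rw [mul_smul_comm, smul_mul_assoc]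
      congr 1
      have h1 : n + 1 - m = (n - m) + 1 := by omega
      have h2 : x + 2*(m:ℤ) - ((n:ℤ)+1) = x - 1 + 2*(m:ℤ) - (n:ℤ) := by ring
      have hc : Commute C (B ^ m) := (show Commute C B from hBC.symm).pow_right m
      have hA : B ^ m * C ^ ((n-m) + 1) = C * (B ^ m * C ^ (n - m)) := by
        rw [pow_succ' C, ← mul_assoc, ← hc.eq, mul_assoc]
      push_cast [h1]
      rw [h2, hA]
      simp [conjTranspose_mul, mul_assoc]

/-- probability formula for a nearest-neighbour OQRW on ℤ with
commuting normal matrices B (left) and C (right), B*B + C*C = I. For the initial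
state supported at site a with density ρ_a, the probability of presence at site x
at time n is binom(n, (n+x−a)/2)·tr((B*B)^{(n−x+a)/2} (C*C)^{(n+x−a)/2} ρ_a) when
n + x − a is even and |x − a| ≤ n, and 0 otherwise. -/
theorem commuting_OQRW_site_probability (k : ℕ) (hk : 1 ≤ k)
    (B C : Matrix (Fin k) (Fin k) ℂ)
    (hBnormal : B * Bᴴ = Bᴴ * B) (hCnormal : C * Cᴴ = Cᴴ * C)
    (hBC : B * C = C * B)
    (hunit : Bᴴ * B + Cᴴ * C = 1)
    (Φ : (ℤ → Matrix (Fin k) (Fin k) ℂ) → (ℤ → Matrix (Fin k) (Fin k) ℂ))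
    (hΦ : ∀ σ (i : ℤ), Φ σ i = B * σ (i + 1) * Bᴴ + C * σ (i - 1) * Cᴴ)
    (a : ℤ) (ρa : Matrix (Fin k) (Fin k) ℂ)
    (hρa : ρa.PosSemidef) (htra : Matrix.trace ρa = 1)
    (ρ : ℤ → Matrix (Fin k) (Fin k) ℂ)
    (hsupp : ρ a = ρa) (hsupp' : ∀ i : ℤ, i ≠ a → ρ i = 0)
    (n : ℕ) (x : ℤ) :
    (Even ((n : ℤ) + x - a) ∧ |x - a| ≤ (n : ℤ) →
      Matrix.trace ((Φ^[n] ρ) x) =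
        (n.choose ((((n : ℤ) + x - a) / 2).toNat) : ℂ) *
          Matrix.trace ((Bᴴ * B) ^ ((((n : ℤ) - x + a) / 2).toNat) *
            (Cᴴ * C) ^ ((((n : ℤ) + x - a) / 2).toNat) * ρa)) ∧
    (¬(Even ((n : ℤ) + x - a) ∧ |x - a| ≤ (n : ℤ)) →
      Matrix.trace ((Φ^[n] ρ) x) = 0) := by
  have hform := OQRW_iterate_formula B C hBC Φ hΦ ρ n x
  constructor
  · rintro ⟨hEven, hle⟩
    obtain ⟨hle1, hle2⟩ := abs_le.mp hle
    obtain ⟨t, ht⟩ := hEven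
    have hm₀ : ((((n:ℤ) - x + a) / 2).toNat : ℤ) = (n:ℤ) - t := by omega
    have hj : ((((n:ℤ) + x - a) / 2).toNat : ℤ) = t := by omega
    set m₀ := (((n:ℤ) - x + a) / 2).toNat with hm₀def
    set j := (((n:ℤ) + x - a) / 2).toNat with hjdef
    have hm₀n : m₀ ≤ n := by omega
    have hmem : m₀ ∈ Finset.range (n+1) := Finset.mem_range.mpr (by omega)
    have harg : x + 2*(m₀:ℤ) - n = a := by omega
    have hnm : n - m₀ = j := by omega
    have hchoose : (n.choose m₀ : ℂ) = (n.choose j : ℂ) := by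
      have h := Nat.choose_symm hm₀n
      rw [hnm] at h
      rw [h]
    have hB : Commute Bᴴ B := hBnormal.symm
    have hC : Commute Cᴴ C := hCnormal.symm
    have hBB : Bᴴ * B = 1 - Cᴴ * C := eq_sub_of_add_eq hunit
    have h2 : Commute (Cᴴ) (Bᴴ * B) := by
      rw [hBB]
      exact (Commute.one_right Cᴴ).sub_right ((Commute.refl Cᴴ).mul_right hC)
    have hAA : (B ^ m₀ * C ^ j)ᴴ * (B ^ m₀ * C ^ j) = (Bᴴ*B)^m₀ * (Cᴴ*C)^j := by
      calc (B ^ m₀ * C ^ j)ᴴ * (B ^ m₀ * C ^ j)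
          = (Cᴴ)^j * ((Bᴴ)^m₀ * B^m₀) * (C^j) := by
            rw [conjTranspose_mul, conjTranspose_pow, conjTranspose_pow]
            simp [mul_assoc]
        _ = (Cᴴ)^j * (Bᴴ*B)^m₀ * C^j := by rw [← hB.mul_pow]
        _ = (Bᴴ*B)^m₀ * ((Cᴴ)^j * C^j) := by rw [(h2.pow_pow j m₀).eq, mul_assoc]
        _ = (Bᴴ*B)^m₀ * (Cᴴ*C)^j := by rw [← hC.mul_pow]
    rw [hform, Matrix.trace_sum]
    simp only [Matrix.trace_smul, smul_eq_mul]
    refine (Finset.sum_eq_single_of_mem m₀ hmem ?_).trans ?_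
    · intro m hm hne
      rw [Finset.mem_range, Nat.lt_succ_iff] at hm
      have hne' : x + 2*(m:ℤ) - n ≠ a := by omega
      rw [hsupp' _ hne']
      simp
    · rw [harg, hsupp, hnm, hchoose]
      congr 1
      rw [Matrix.trace_mul_cycle, hAA]
  · intro hnot
    rw [hform, Matrix.trace_sum]
    refine Finset.sum_eq_zero fun m hm => ?_
    rw [Finset.mem_range, Nat.lt_succ_iff] at hm
    have hne : x + 2*(m:ℤ) - n ≠ a := by
      intro h
      exact hnot ⟨⟨(n:ℤ) - m, by omega⟩, by rw [abs_le]; constructor <;> omega⟩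
    rw [hsupp' _ hne]
    simp
end

section
/- Let B, C be k×k complex normal matrices with BC = CB and B*B + C*C = I, defining the nearest-neighbour open quantum random walk on ℤ with left-step matrix B and right-step matrix C. For x ∈ ℤ, x ≠ 0, and n ≥ 1, let b_n(ρ₀; x) = ∑_W tr(W ρ₀ W*), the sum over all nearest-neighbour paths 0 = x₀, x₁, …, x_n = x with |x_m − x_{m−1}| = 1 and x_m ≠ x for m < n, where W is the product (latest step leftmost) of B for each leftward step and C for each rightward step. Then, for n ≥ |x| with n + x even: b_n(ρ₀; x) = (|x|/n) · binom(n, (n+x)/2) · tr( (B*B)^{(n−x)/2} (C*C)^{(n+x)/2} ρ₀ ), and b_n(ρ₀; x) = 0 when n + x is odd. -/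
open Matrix ComplexOrder

/-- A nearest-neighbour path of length n from 0 to x which does not visit x before
time n (frozen at x from time n on, so the data is exactly the finite path). -/
def IsFirstVisitPath (n : ℕ) (x : ℤ) (p : ℕ → ℤ) : Prop :=
  p 0 = 0 ∧ p n = x ∧
  (∀ m, m < n → p (m + 1) - p m = 1 ∨ p (m + 1) - p m = -1) ∧
  (∀ m, m < n → p m ≠ x) ∧
  (∀ m, n ≤ m → p m = x)

/-- The word operator of a nearest-neighbour path: the product (latest step leftmost)
of B for each leftward step and C for each rightward step. -/
noncomputable def wordOp {k : ℕ} (B C : Matrix (Fin k) (Fin k) ℂ)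
    (n : ℕ) (p : ℕ → ℤ) : Matrix (Fin k) (Fin k) ℂ :=
  (List.range n).foldl
    (fun M m => (if p (m + 1) = p m - 1 then B else C) * M) 1

/-- b_n(ρ₀; x): the probability that the walk started at 0 with internal state ρ₀
visits site x for the first time at time n. -/
noncomputable def firstVisitProb {k : ℕ} (B C : Matrix (Fin k) (Fin k) ℂ)
    (n : ℕ) (x : ℤ) (ρ₀ : Matrix (Fin k) (Fin k) ℂ) : ℝ :=
  ∑' q : {p : ℕ → ℤ // IsFirstVisitPath n x p},
    (Matrix.trace (wordOp B C n q.val * ρ₀ * (wordOp B C n q.val)ᴴ)).re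


/-- step value of a boolean: +1 for true, -1 for false -/
def stp (b : Bool) : ℤ := if b then 1 else -1

/-- signed sum of a boolean word -/
def wsum (l : List Bool) : ℤ := (l.map stp).sum

@[simp] lemma wsum_nil : wsum [] = 0 := rfl

@[simp] lemma wsum_cons (b : Bool) (l : List Bool) : wsum (b :: l) = stp b + wsum l := by
  simp [wsum]

lemma wsum_append (l₁ l₂ : List Bool) : wsum (l₁ ++ l₂) = wsum l₁ + wsum l₂ := by
  simp [wsum]

lemma wsum_le_length (l : List Bool) : wsum l ≤ l.length := by
  induction l with
  | nil => simp
  | cons b t ih => simp only [wsum_cons, List.length_cons]; cases b <;> simp [stp] <;> omega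

lemma neg_length_le_wsum (l : List Bool) : -(l.length : ℤ) ≤ wsum l := by
  induction l with
  | nil => simp
  | cons b t ih => simp only [wsum_cons, List.length_cons]; cases b <;> simp [stp] <;> omega

lemma even_wsum (l : List Bool) : Even ((l.length : ℤ) + wsum l) := by
  induction l with
  | nil => simp
  | cons b t ih =>
    simp only [wsum_cons, List.length_cons]
    rcases ih with ⟨r, hr⟩
    cases b <;> simp only [stp, if_true, if_false] <;>
      [exact ⟨r, by push_cast; omega⟩; exact ⟨r + 1, by push_cast; omega⟩]

/-- ballot-type set: boolean words of length n, signed sum x, all nonempty suffixes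
have positive signed sum -/
def ballotSet (n : ℕ) (x : ℤ) : Set (List Bool) :=
  {l | l.length = n ∧ wsum l = x ∧ ∀ t, t ≠ [] → t <:+ l → 0 < wsum t}

lemma ballotSet_finite (n : ℕ) (x : ℤ) : (ballotSet n x).Finite :=
  (List.finite_length_eq Bool n).subset fun _ h => h.1

lemma ballotSet_empty_of_lt (n : ℕ) (x : ℤ) (h : (n : ℤ) < x) : ballotSet n x = ∅ := by
  ext l
  simp only [ballotSet, Set.mem_setOf_eq, Set.mem_empty_iff_false, iff_false, not_and]
  intro h1 h2
  exfalso
  have := wsum_le_length l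
  omega

lemma ballotSet_empty_of_nonpos (n : ℕ) (x : ℤ) (hn : 1 ≤ n) (h : x ≤ 0) :
    ballotSet n x = ∅ := by
  ext l
  simp only [ballotSet, Set.mem_setOf_eq, Set.mem_empty_iff_false, iff_false, not_and]
  intro h1 h2 h3
  have : 0 < wsum l := h3 l (by rintro rfl; simp at h1; omega) (List.suffix_refl l)
  omega

lemma ballotSet_top (n : ℕ) : ballotSet n n = {List.replicate n true} := by
  ext l
  simp only [ballotSet, Set.mem_setOf_eq, Set.mem_singleton_iff]
  constructor
  · rintro ⟨h1, h2, _⟩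
    refine List.eq_replicate_iff.2 ⟨h1, fun b hb => ?_⟩
    by_contra hb'
    -- b = false in l, so wsum < length
    have : wsum l < l.length := by
      obtain ⟨s, t, rfl⟩ := List.append_of_mem hb
      have hb'' : b = false := by cases b; rfl; exact absurd rfl hb'
      subst hb''
      have h1 := wsum_le_length s
      have h2 := wsum_le_length t
      rw [wsum_append, wsum_cons]
      simp [stp]
      omega
    omega
  · rintro rfl
    refine ⟨by simp, by simp [wsum, stp, List.map_replicate], fun t ht hts => ?_⟩
    have hne : t ≠ [] := ht
    obtain ⟨m, hm, rfl⟩ : ∃ m, m ≤ n ∧ t = List.replicate m true := by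
      obtain ⟨s, hs⟩ := hts
      refine ⟨t.length, ?_, ?_⟩
      · have := congrArg List.length hs; simp at this; omega
      · refine List.eq_replicate_iff.2 ⟨rfl, fun b hb => ?_⟩
        have : b ∈ List.replicate n true := hs ▸ (List.mem_append.2 (Or.inr hb))
        exact List.eq_of_mem_replicate this
    rcases m with _ | m
    · simp at hne
    · have : wsum (List.replicate (m+1) true) = (m+1 : ℤ) := by
        simp [wsum, List.map_replicate, stp]
      rw [this]; omega

lemma ballotSet_cons (n : ℕ) (x : ℤ) (hx : 0 < x) :
    ballotSet (n + 1) x =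
      (List.cons true '' ballotSet n (x - 1)) ∪ (List.cons false '' ballotSet n (x + 1)) := by
  ext l
  constructor
  · rintro ⟨h1, h2, h3⟩
    obtain ⟨b, t, rfl⟩ : ∃ b t, l = b :: t := by
      cases l with
      | nil => simp at h1
      | cons b t => exact ⟨b, t, rfl⟩
    have ht : t ∈ ballotSet n (x - stp b) := by
      refine ⟨by simpa using h1, by rw [wsum_cons] at h2; omega, fun s hs hst => ?_⟩
      exact h3 s hs (hst.trans (List.suffix_cons b t))
    cases b
    · right; exact ⟨t, by simpa [stp] using ht, rfl⟩
    · left; exact ⟨t, by simpa [stp] using ht, rfl⟩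
  · rintro (⟨t, ⟨h1, h2, h3⟩, rfl⟩ | ⟨t, ⟨h1, h2, h3⟩, rfl⟩) <;>
    · refine ⟨by simp [h1], by simp [wsum_cons, stp]; omega, fun s hs hst => ?_⟩
      rcases List.suffix_cons_iff.1 hst with rfl | hst'
      · simp [wsum_cons, stp]; omega
      · exact h3 s hs hst'

lemma cons_injective (b : Bool) : Function.Injective (List.cons b : List Bool → List Bool) :=
  fun _ _ h => by injection h

lemma ballot_count : ∀ n r q : ℕ, q < r → r + q = n →
    (ballotSet n ((r : ℤ) - q)).ncard + (n - 1).choose r = (n - 1).choose (r - 1) := by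
  intro n
  induction n using Nat.strong_induction_on with
  | _ n IH =>
    intro r q hqr hrq
    rcases Nat.eq_zero_or_pos q with rfl | hq
    · -- q = 0, x = n = r
      have hr : r = n := by omega
      subst hr
      rw [show ((r : ℤ) - ((0:ℕ) : ℤ)) = (r : ℤ) by push_cast; ring,
        ballotSet_top r, Set.ncard_singleton]
      have h1 : (r - 1).choose r = 0 := Nat.choose_eq_zero_of_lt (by omega)
      have h2 : (r - 1).choose (r - 1) = 1 := Nat.choose_self _
      omega
    · -- q ≥ 1, so r ≥ 2
      obtain ⟨r', rfl⟩ : ∃ r', r = r' + 2 := ⟨r - 2, by omega⟩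
      obtain ⟨q', rfl⟩ : ∃ q', q = q' + 1 := ⟨q - 1, by omega⟩
      obtain ⟨m, rfl⟩ : ∃ m, n = m + 2 := ⟨n - 2, by omega⟩
      have hmq : r' + q' + 1 = m := by omega
      have hq' : q' ≤ r' := by omega
      have hx : (0 : ℤ) < ((r' + 2 : ℕ) : ℤ) - ((q' + 1 : ℕ) : ℤ) := by push_cast; omega
      rw [show m + 2 = (m + 1) + 1 from rfl, ballotSet_cons (m + 1) _ hx]
      have hdisj : Disjoint (List.cons true '' ballotSet (m+1) (((r'+2:ℕ) : ℤ) - ((q'+1:ℕ):ℤ) - 1))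
          (List.cons false '' ballotSet (m+1) (((r'+2:ℕ) : ℤ) - ((q'+1:ℕ):ℤ) + 1)) := by
        rw [Set.disjoint_left]
        rintro l ⟨t, _, rfl⟩ ⟨s, _, hs⟩
        injection hs with h1 _
        exact Bool.noConfusion h1
      rw [Set.ncard_union_eq hdisj
          ((ballotSet_finite _ _).image _) ((ballotSet_finite _ _).image _),
        Set.ncard_image_of_injective _ (cons_injective true),
        Set.ncard_image_of_injective _ (cons_injective false)]
      -- false branch: (r'+2, q')
      have IH2 : (ballotSet (m+1) (((r'+2:ℕ) : ℤ) - (q' : ℕ))).ncard + m.choose (r'+2)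
          = m.choose (r'+1) := by
        have := IH (m+1) (by omega) (r'+2) q' (by omega) (by omega)
        simpa using this
      have hc2 : (((r'+2:ℕ) : ℤ) - ((q':ℕ) : ℤ)) = ((r'+2:ℕ) : ℤ) - ((q'+1:ℕ) : ℤ) + 1 := by
        push_cast; ring
      rw [hc2] at IH2
      have hp1 : (m + 1 + 1 - 1).choose (r' + 2) = m.choose (r'+1) + m.choose (r'+2) := by
        simp only [Nat.add_sub_cancel]
        exact Nat.choose_succ_succ m (r'+1)
      have hp2 : (m + 1 + 1 - 1).choose (r' + 2 - 1) = m.choose r' + m.choose (r'+1) := by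
        simp only [Nat.add_sub_cancel]
        exact Nat.choose_succ_succ m r'
      rcases Nat.lt_or_ge q' r' with hq2 | hq2
      · -- generic case: IH applies to (r'+1, q'+1)
        have IH1 : (ballotSet (m+1) (((r'+1:ℕ) : ℤ) - ((q'+1:ℕ) : ℤ))).ncard + m.choose (r'+1)
            = m.choose r' := by
          have := IH (m+1) (by omega) (r'+1) (q'+1) (by omega) (by omega)
          simpa using this
        have hc1 : (((r'+1:ℕ) : ℤ) - ((q'+1:ℕ) : ℤ)) = ((r'+2:ℕ) : ℤ) - ((q'+1:ℕ) : ℤ) - 1 := by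
          push_cast; ring
        rw [hc1] at IH1
        omega
      · -- q' = r' : x = 1, true branch empty, use symmetry
        have hqe : q' = r' := by omega
        subst hqe
        have hx1 : ((q'+2:ℕ) : ℤ) - ((q'+1:ℕ) : ℤ) - 1 = 0 := by push_cast; ring
        rw [hx1, ballotSet_empty_of_nonpos (m+1) 0 (by omega) le_rfl, Set.ncard_empty]
        have hsymm : m.choose (q'+1) = m.choose q' := by
          obtain rfl : m = 2 * q' + 1 := by omega
          have := Nat.choose_symm (show q'+1 ≤ 2*q'+1 by omega)
          rw [show (2*q'+1) - (q'+1) = q' by omega] at this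
          exact this.symm
        omega

section Bridge

/-- step list (time order, true = step right) of a path -/
def stepList (p : ℕ → ℤ) (n : ℕ) : List Bool :=
  (List.range n).map (fun m => decide (p (m + 1) = p m + 1))

@[simp] lemma stepList_length (p : ℕ → ℤ) (n : ℕ) : (stepList p n).length = n := by
  simp [stepList]

lemma list_sum_range (f : ℕ → ℤ) (n : ℕ) :
    ((List.range n).map f).sum = ∑ i ∈ Finset.range n, f i := by
  induction n with
  | zero => simp
  | succ n ih => rw [List.range_succ, Finset.sum_range_succ, ← ih]; simp

lemma wsum_take_stepList (p : ℕ → ℤ) (n : ℕ) (h0 : p 0 = 0)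
    (hstep : ∀ m, m < n → p (m + 1) - p m = 1 ∨ p (m + 1) - p m = -1)
    (m : ℕ) (hm : m ≤ n) : wsum ((stepList p n).take m) = p m := by
  have htake : (stepList p n).take m = (List.range m).map (fun j => decide (p (j+1) = p j + 1)) := by
    rw [stepList, ← List.map_take, List.take_range, Nat.min_eq_left hm]
  rw [htake]
  have : wsum ((List.range m).map (fun j => decide (p (j+1) = p j + 1)))
      = ∑ i ∈ Finset.range m, (p (i+1) - p i) := by
    rw [wsum, List.map_map, list_sum_range]
    refine Finset.sum_congr rfl fun i hi => ?_
    rcases hstep i (lt_of_lt_of_le (Finset.mem_range.1 hi) hm) with h | h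
    · simp [stp, show p (i+1) = p i + 1 by omega]
    · simp [stp, show p (i+1) ≠ p i + 1 by omega]
      omega
  rw [this, Finset.sum_range_sub, h0, sub_zero]

lemma wsum_take_add_drop (l : List Bool) (m : ℕ) :
    wsum (l.take m) + wsum (l.drop m) = wsum l := by
  rw [← wsum_append, List.take_append_drop]

lemma path_lt (n : ℕ) (x : ℤ) (p : ℕ → ℤ) (hp : IsFirstVisitPath n x p) (hx : 0 < x) :
    ∀ m, m < n → p m < x := by
  intro m
  induction m with
  | zero => intro _; rw [hp.1]; exact hx
  | succ m ih =>
    intro hm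
    have h1 := ih (by omega)
    have hstep := hp.2.2.1 m (by omega)
    have hne := hp.2.2.2.1 (m+1) hm
    omega

lemma stepList_mem_ballotSet (n : ℕ) (x : ℤ) (p : ℕ → ℤ)
    (hp : IsFirstVisitPath n x p) (hx : 0 < x) :
    stepList p n ∈ ballotSet n x := by
  obtain ⟨h0, hn, hstep, havoid, hfroz⟩ := hp
  refine ⟨stepList_length p n, ?_, ?_⟩
  · have := wsum_take_stepList p n h0 hstep n le_rfl
    rwa [List.take_of_length_le (by simp), hn] at this
  · intro t ht hts
    have hlen : t.length ≤ n := by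
      have := hts.length_le; simpa using this
    have htl : 1 ≤ t.length := by
      rcases t with _ | ⟨b, t⟩; · exact absurd rfl ht
      · simp
    set m := n - t.length with hm
    have hdrop : t = (stepList p n).drop m := by
      have := List.suffix_iff_eq_drop.1 hts
      rwa [stepList_length] at this
    have hws : wsum ((stepList p n).take m) = p m :=
      wsum_take_stepList p n h0 hstep m (by omega)
    have hwl : wsum (stepList p n) = x := by
      have := wsum_take_stepList p n h0 hstep n le_rfl
      rwa [List.take_of_length_le (by simp), hn] at this
    have hsum := wsum_take_add_drop (stepList p n) m
    have hlt : p m < x := path_lt n x p ⟨h0, hn, hstep, havoid, hfroz⟩ hx m (by omega)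
    rw [hdrop]
    omega

/-- path reconstructed from a step list -/
def pOf (l : List Bool) (n : ℕ) (x : ℤ) : ℕ → ℤ :=
  fun m => if m < n then wsum (l.take m) else x

lemma pOf_eq_wsum_take (l : List Bool) (n : ℕ) (x : ℤ)
    (hlen : l.length = n) (hws : wsum l = x) (m : ℕ) (hm : m ≤ n) :
    pOf l n x m = wsum (l.take m) := by
  unfold pOf
  rcases lt_or_eq_of_le hm with h | rfl
  · rw [if_pos h]
  · rw [if_neg (lt_irrefl m), List.take_of_length_le (by omega), hws]

lemma wsum_take_succ (l : List Bool) (m : ℕ) (hm : m < l.length) :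
    wsum (l.take (m+1)) = wsum (l.take m) + stp (l.get ⟨m, hm⟩) := by
  rw [List.take_succ, wsum_append]
  congr 1
  simp [List.getElem?_eq_getElem hm, wsum]

lemma pOf_isFirstVisitPath (l : List Bool) (n : ℕ) (x : ℤ)
    (hl : l ∈ ballotSet n x) (hx : 0 < x) (hn : 1 ≤ n) :
    IsFirstVisitPath n x (pOf l n x) := by
  obtain ⟨hlen, hws, hpos⟩ := hl
  have hdrop_pos : ∀ m, m < n → 0 < wsum (l.drop m) := by
    intro m hm
    refine hpos _ ?_ (List.drop_suffix m l)
    intro hnil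
    have := congrArg List.length hnil
    simp [hlen] at this
    omega
  refine ⟨?_, ?_, ?_, ?_, ?_⟩
  · rw [pOf_eq_wsum_take l n x hlen hws 0 (by omega)]; simp
  · unfold pOf; rw [if_neg (lt_irrefl n)]
  · intro m hm
    rw [pOf_eq_wsum_take l n x hlen hws (m+1) (by omega),
      pOf_eq_wsum_take l n x hlen hws m (by omega),
      wsum_take_succ l m (by omega)]
    rcases (l.get ⟨m, by omega⟩) with _ | _ <;> simp [stp]
  · intro m hm
    rw [pOf_eq_wsum_take l n x hlen hws m (by omega)]
    have h1 := hdrop_pos m hm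
    have h2 := wsum_take_add_drop l m
    omega
  · intro m hm
    unfold pOf
    rw [if_neg (by omega)]

lemma pOf_stepList (n : ℕ) (x : ℤ) (p : ℕ → ℤ) (hp : IsFirstVisitPath n x p) :
    pOf (stepList p n) n x = p := by
  funext m
  unfold pOf
  by_cases hm : m < n
  · rw [if_pos hm, wsum_take_stepList p n hp.1 hp.2.2.1 m (by omega)]
  · rw [if_neg hm, (hp.2.2.2.2 m (by omega)).symm]

lemma stepList_pOf (l : List Bool) (n : ℕ) (x : ℤ)
    (hlen : l.length = n) (hws : wsum l = x) :
    stepList (pOf l n x) n = l := by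
  apply List.ext_getElem (by simp [hlen])
  intro m hm1 hm2
  have hmn : m < n := by simpa using hm1
  have hstep : pOf l n x (m+1) - pOf l n x m = stp (l.get ⟨m, by omega⟩) := by
    rw [pOf_eq_wsum_take l n x hlen hws (m+1) (by omega),
      pOf_eq_wsum_take l n x hlen hws m (by omega),
      wsum_take_succ l m (by omega)]
    ring
  simp only [stepList, List.getElem_map, List.getElem_range]
  rcases hb : (l.get ⟨m, by omega⟩) with _ | _ <;>
    rw [hb] at hstep <;> simp [stp] at hstep <;>
    · have : l[m] = l.get ⟨m, by omega⟩ := rfl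
      rw [this, hb]
      simp
      omega

/-- the equivalence between first-visit paths and ballot words, for x > 0 -/
noncomputable def pathEquivBallot (n : ℕ) (x : ℤ) (hx : 0 < x) (hn : 1 ≤ n) :
    {p : ℕ → ℤ // IsFirstVisitPath n x p} ≃ (ballotSet n x) where
  toFun q := ⟨stepList q.1 n, stepList_mem_ballotSet n x q.1 q.2 hx⟩
  invFun l := ⟨pOf l.1 n x, pOf_isFirstVisitPath l.1 n x l.2 hx hn⟩
  left_inv q := Subtype.ext (pOf_stepList n x q.1 q.2)
  right_inv l := Subtype.ext (stepList_pOf l.1 n x l.2.1 l.2.2.1)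

/-- sign-flip equivalence of first-visit paths -/
def pathEquivNeg (n : ℕ) (x : ℤ) :
    {p : ℕ → ℤ // IsFirstVisitPath n x p} ≃ {p : ℕ → ℤ // IsFirstVisitPath n (-x) p} where
  toFun q := ⟨fun m => -(q.1 m), by
    obtain ⟨h0, hn, hstep, havoid, hfroz⟩ := q.2
    refine ⟨by simp [h0], by simp [hn], fun m hm => ?_, fun m hm => ?_, fun m hm => ?_⟩
    · dsimp only; rcases hstep m hm with h | h <;> [right; left] <;> omega
    · dsimp only; have := havoid m hm; omega
    · simp [hfroz m hm]⟩
  invFun q := ⟨fun m => -(q.1 m), by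
    obtain ⟨h0, hn, hstep, havoid, hfroz⟩ := q.2
    refine ⟨by simp [h0], by simp [hn], fun m hm => ?_, fun m hm => ?_, fun m hm => ?_⟩
    · dsimp only; rcases hstep m hm with h | h <;> [right; left] <;> omega
    · dsimp only; have := havoid m hm; omega
    · simp [hfroz m hm]⟩
  left_inv q := Subtype.ext (by funext m; simp)
  right_inv q := Subtype.ext (by funext m; simp)

end Bridge

section Word

variable {k : ℕ} (B C : Matrix (Fin k) (Fin k) ℂ)

/-- number of left steps among the first j steps -/
def lcount (p : ℕ → ℤ) (j : ℕ) : ℕ :=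
  ((Finset.range j).filter (fun m => p (m + 1) = p m - 1)).card

lemma lcount_le (p : ℕ → ℤ) (j : ℕ) : lcount p j ≤ j :=
  le_trans (Finset.card_filter_le _ _) (by simp)

lemma wordOp_succ (n : ℕ) (p : ℕ → ℤ) :
    wordOp B C (n + 1) p = (if p (n + 1) = p n - 1 then B else C) * wordOp B C n p := by
  unfold wordOp
  rw [List.range_succ, List.foldl_append, List.foldl_cons, List.foldl_nil]

lemma wordOp_eq_pow (hBC : B * C = C * B) (p : ℕ → ℤ) :
    ∀ j, wordOp B C j p = B ^ (lcount p j) * C ^ (j - lcount p j) := by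
  intro j
  induction j with
  | zero => simp [wordOp, lcount]
  | succ j ih =>
    rw [wordOp_succ, ih]
    have hrange : (Finset.range (j+1)).filter (fun m => p (m + 1) = p m - 1)
        = if p (j + 1) = p j - 1
          then insert j ((Finset.range j).filter (fun m => p (m + 1) = p m - 1))
          else (Finset.range j).filter (fun m => p (m + 1) = p m - 1) := by
      rw [Finset.range_add_one, Finset.filter_insert]
    have hle := lcount_le p j
    by_cases h : p (j + 1) = p j - 1
    · have hl : lcount p (j+1) = lcount p j + 1 := by
        unfold lcount
        rw [hrange, if_pos h, Finset.card_insert_of_notMem (by simp)]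
      rw [if_pos h, hl, show j + 1 - (lcount p j + 1) = j - lcount p j by omega,
        ← mul_assoc, ← pow_succ']
    · have hl : lcount p (j+1) = lcount p j := by
        unfold lcount
        rw [hrange, if_neg h]
      have hc : Commute C B := hBC.symm
      rw [if_neg h, hl, show j + 1 - lcount p j = (j - lcount p j) + 1 by omega,
        ← mul_assoc, (hc.pow_right (lcount p j)).eq, mul_assoc, ← pow_succ']

lemma steps_sum (n : ℕ) (x : ℤ) (p : ℕ → ℤ) (hp : IsFirstVisitPath n x p) :
    (n : ℤ) - 2 * lcount p n = x := by
  have htel : ∑ m ∈ Finset.range n, (p (m + 1) - p m) = x := by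
    rw [Finset.sum_range_sub, hp.1, hp.2.1, sub_zero]
  rw [← Finset.sum_filter_add_sum_filter_not (Finset.range n)
    (fun m => p (m + 1) = p m - 1)] at htel
  have hv1 : ∀ m ∈ (Finset.range n).filter (fun m => p (m + 1) = p m - 1),
      p (m + 1) - p m = -1 := by
    intro m hm
    have := (Finset.mem_filter.1 hm).2
    omega
  have hv2 : ∀ m ∈ (Finset.range n).filter (fun m => ¬ p (m + 1) = p m - 1),
      p (m + 1) - p m = 1 := by
    intro m hm
    obtain ⟨hm1, hm2⟩ := Finset.mem_filter.1 hm
    have := hp.2.2.1 m (Finset.mem_range.1 hm1)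
    omega
  rw [Finset.sum_congr rfl hv1, Finset.sum_congr rfl hv2, Finset.sum_const,
    Finset.sum_const] at htel
  have hcard := Finset.card_filter_add_card_filter_not
    (s := Finset.range n) (p := fun m => p (m + 1) = p m - 1)
  rw [Finset.card_range] at hcard
  simp only [nsmul_eq_mul, mul_one, mul_neg_one] at htel
  unfold lcount
  omega

lemma trace_word_conj (hBnormal : B * Bᴴ = Bᴴ * B) (hCnormal : C * Cᴴ = Cᴴ * C)
    (hunit : Bᴴ * B + Cᴴ * C = 1) (l r : ℕ) (ρ : Matrix (Fin k) (Fin k) ℂ) :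
    (B ^ l * C ^ r * ρ * (B ^ l * C ^ r)ᴴ).trace
      = ((Bᴴ * B) ^ l * (Cᴴ * C) ^ r * ρ).trace := by
  rw [Matrix.trace_mul_cycle]
  congr 1
  have hW : (B ^ l * C ^ r)ᴴ = (Cᴴ) ^ r * (Bᴴ) ^ l := by
    rw [Matrix.conjTranspose_mul, Matrix.conjTranspose_pow, Matrix.conjTranspose_pow]
  have hcB : Commute Bᴴ B := hBnormal.symm
  have hcC : Commute Cᴴ C := hCnormal.symm
  have hBB : (Bᴴ * B) ^ l = (Bᴴ) ^ l * B ^ l := hcB.mul_pow l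
  have hCC : (Cᴴ * C) ^ r = (Cᴴ) ^ r * C ^ r := hcC.mul_pow r
  have hsub : Bᴴ * B = 1 - Cᴴ * C := by
    rw [← hunit]; abel
  have hKC : Commute (Bᴴ * B) (Cᴴ) := by
    rw [hsub]
    refine (Commute.one_left Cᴴ).sub_left ?_
    show Cᴴ * C * Cᴴ = Cᴴ * (Cᴴ * C)
    rw [mul_assoc, hCnormal]
  have hK2 : Commute ((Bᴴ * B) ^ l) ((Cᴴ) ^ r) := (hKC.pow_pow l r)
  rw [hW]
  congr 1
  calc (Cᴴ) ^ r * (Bᴴ) ^ l * (B ^ l * C ^ r)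
      = (Cᴴ) ^ r * ((Bᴴ) ^ l * B ^ l) * C ^ r := by simp only [mul_assoc]
    _ = (Cᴴ) ^ r * (Bᴴ * B) ^ l * C ^ r := by rw [← hBB]
    _ = (Bᴴ * B) ^ l * (Cᴴ) ^ r * C ^ r := by rw [hK2.symm.eq]
    _ = (Bᴴ * B) ^ l * (Cᴴ * C) ^ r := by rw [hCC, mul_assoc]

end Word

lemma path_parity (n : ℕ) (x : ℤ) (p : ℕ → ℤ) (hp : IsFirstVisitPath n x p) :
    Even ((n : ℤ) + x) := by
  have key : ∀ m, m ≤ n → Even ((m : ℤ) + p m) := by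
    intro m
    induction m with
    | zero => intro _; simp [hp.1]
    | succ m ih =>
      intro hm
      obtain ⟨t, ht⟩ := ih (by omega)
      have hstep := hp.2.2.1 m (by omega)
      rcases hstep with h | h
      · exact ⟨t + 1, by push_cast; omega⟩
      · exact ⟨t, by push_cast; omega⟩
  have := key n le_rfl
  rwa [hp.2.1] at this

lemma card_paths (n : ℕ) (x : ℤ) (hn : 1 ≤ n) (hx : x ≠ 0)
    (heven : Even ((n : ℤ) + x)) (hxn : |x| ≤ (n : ℤ)) :
    n * Nat.card {p : ℕ → ℤ // IsFirstVisitPath n x p}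
      = x.natAbs * n.choose ((((n : ℤ) + x) / 2).toNat) := by
  set a : ℕ := x.natAbs with ha
  have haz : (a : ℤ) = |x| := (Int.abs_eq_natAbs x).symm
  have ha1 : 1 ≤ a := by omega
  have han : a ≤ n := by omega
  obtain ⟨t, ht⟩ := heven
  set r : ℕ := (n + a) / 2 with hr
  have hr2 : 2 * r = n + a := by omega
  have hq : n - r + r = n := by omega
  have hcard : Nat.card {p : ℕ → ℤ // IsFirstVisitPath n x p}
      = (ballotSet n ((r : ℤ) - ((n - r : ℕ) : ℤ))).ncard := by
    have habs : ((r : ℤ) - ((n - r : ℕ) : ℤ)) = |x| := by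
      push_cast [Nat.cast_sub (by omega : r ≤ n)]
      omega
    rw [habs, ← Nat.card_coe_set_eq]
    rcases lt_or_gt_of_ne hx with hneg | hpos
    · rw [abs_of_neg hneg]
      exact Nat.card_congr ((pathEquivNeg n x).trans (pathEquivBallot n (-x) (by omega) hn))
    · rw [abs_of_pos hpos]
      exact Nat.card_congr (pathEquivBallot n x hpos hn)
  have hb := ballot_count n r (n - r) (by omega) (by omega)
  rw [← hcard] at hb
  -- binomial identities
  have hr1 : 1 ≤ r := by omega
  have hA : n * (n - 1).choose (r - 1) = n.choose r * r := by
    have := Nat.add_one_mul_choose_eq (n - 1) (r - 1)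
    rwa [show n - 1 + 1 = n by omega,
      show r - 1 + 1 = r by omega] at this
  have hB : n * (n - 1).choose r = n.choose r * (n - r) := by
    have h1 := Nat.add_one_mul_choose_eq (n - 1) r
    rw [show n - 1 + 1 = n by omega] at h1
    rw [h1, Nat.choose_succ_right_eq]
  have hmain : n * Nat.card {p : ℕ → ℤ // IsFirstVisitPath n x p} = a * n.choose r := by
    have h1 : ((Nat.card {p : ℕ → ℤ // IsFirstVisitPath n x p} : ℤ))
        + ((n - 1).choose r : ℤ) = ((n - 1).choose (r - 1) : ℤ) := by exact_mod_cast hb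
    have h2 : (n : ℤ) * ((n - 1).choose (r - 1) : ℤ) = (n.choose r : ℤ) * r := by
      exact_mod_cast hA
    have h3 : (n : ℤ) * ((n - 1).choose r : ℤ) = (n.choose r : ℤ) * ((n : ℤ) - r) := by
      have : (n : ℤ) * ((n - 1).choose r : ℤ) = (n.choose r : ℤ) * ((n - r : ℕ) : ℤ) := by
        exact_mod_cast hB
      rwa [Nat.cast_sub (by omega : r ≤ n)] at this
    have h4 : 2 * (r : ℤ) = (n : ℤ) + a := by exact_mod_cast hr2
    have : (n : ℤ) * Nat.card {p : ℕ → ℤ // IsFirstVisitPath n x p}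
        = (a : ℤ) * n.choose r := by
      linear_combination (n : ℤ) * h1 + h2 - h3 + (n.choose r : ℤ) * h4
    exact_mod_cast this
  rw [hmain]
  congr 1
  -- n.choose r = n.choose (((n + x)/2).toNat)
  rcases lt_or_gt_of_ne hx with hneg | hpos
  · have : (((n : ℤ) + x) / 2).toNat = n - r := by
      rw [abs_of_neg hneg] at haz
      omega
    rw [this]
    exact (Nat.choose_symm (by omega : r ≤ n)).symm
  · have : (((n : ℤ) + x) / 2).toNat = r := by
      rw [abs_of_pos hpos] at haz
      omega
    rw [this]
/-- hitting time formula for a nearest-neighbour OQRW on ℤ with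
commuting normal matrices B (left) and C (right), B*B + C*C = I. For x ≠ 0 and
n ≥ |x| with n + x even,
b_n(ρ₀; x) = (|x|/n)·binom(n, (n+x)/2)·tr((B*B)^{(n−x)/2} (C*C)^{(n+x)/2} ρ₀),
and b_n(ρ₀; x) = 0 when n + x is odd. -/
theorem commuting_OQRW_first_visit (k : ℕ) (hk : 1 ≤ k)
    (B C : Matrix (Fin k) (Fin k) ℂ)
    (hBnormal : B * Bᴴ = Bᴴ * B) (hCnormal : C * Cᴴ = Cᴴ * C)
    (hBC : B * C = C * B)
    (hunit : Bᴴ * B + Cᴴ * C = 1)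
    (ρ₀ : Matrix (Fin k) (Fin k) ℂ) (hρ₀ : ρ₀.PosSemidef) (htr : Matrix.trace ρ₀ = 1)
    (x : ℤ) (hx : x ≠ 0) (n : ℕ) (hn : 1 ≤ n) :
    (Even ((n : ℤ) + x) ∧ |x| ≤ (n : ℤ) →
      firstVisitProb B C n x ρ₀ =
        ((|x| : ℤ) : ℝ) / (n : ℝ) *
          (n.choose ((((n : ℤ) + x) / 2).toNat) : ℝ) *
          (Matrix.trace ((Bᴴ * B) ^ ((((n : ℤ) - x) / 2).toNat) *
            (Cᴴ * C) ^ ((((n : ℤ) + x) / 2).toNat) * ρ₀)).re) ∧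
    (¬ Even ((n : ℤ) + x) → firstVisitProb B C n x ρ₀ = 0) := by
  constructor
  · rintro ⟨heven, hxn⟩
    have hfin : Finite {p : ℕ → ℤ // IsFirstVisitPath n x p} := by
      rcases lt_or_gt_of_ne hx with hneg | hpos
      · have := (ballotSet_finite n (-x)).to_subtype
        exact Finite.of_equiv _
          ((pathEquivNeg n x).trans (pathEquivBallot n (-x) (by omega) hn)).symm
      · have := (ballotSet_finite n x).to_subtype
        exact Finite.of_equiv _ (pathEquivBallot n x hpos hn).symm
    letI := Fintype.ofFinite {p : ℕ → ℤ // IsFirstVisitPath n x p}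
    set a := (((n : ℤ) - x) / 2).toNat with ha
    set b := (((n : ℤ) + x) / 2).toNat with hb
    set T := (Matrix.trace ((Bᴴ * B) ^ a * (Cᴴ * C) ^ b * ρ₀)).re with hT
    have hterm : ∀ q : {p : ℕ → ℤ // IsFirstVisitPath n x p},
        (Matrix.trace (wordOp B C n q.1 * ρ₀ * (wordOp B C n q.1)ᴴ)).re = T := by
      intro q
      have hsum := steps_sum n x q.1 q.2
      have hle := lcount_le q.1 n
      obtain ⟨t, ht⟩ := heven
      have hla : lcount q.1 n = a := by omega
      have hrb : n - lcount q.1 n = b := by omega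
      rw [wordOp_eq_pow B C hBC q.1 n, hrb, hla,
        trace_word_conj B C hBnormal hCnormal hunit a b ρ₀]
    unfold firstVisitProb
    rw [tsum_fintype, Finset.sum_congr rfl (fun q _ => hterm q), Finset.sum_const,
      Finset.card_univ, ← Nat.card_eq_fintype_card, nsmul_eq_mul]
    have hcard := card_paths n x hn hx heven hxn
    have hnR : (n : ℝ) ≠ 0 := Nat.cast_ne_zero.2 (by omega)
    have hNR : (Nat.card {p : ℕ → ℤ // IsFirstVisitPath n x p} : ℝ)
        = (x.natAbs : ℝ) * (n.choose b : ℝ) / n := by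
      rw [eq_div_iff hnR, hb, mul_comm]
      exact_mod_cast congrArg (fun m : ℕ => (m : ℝ)) hcard
    rw [hNR]
    have habs : ((|x| : ℤ) : ℝ) = (x.natAbs : ℝ) := by
      rw [Int.abs_eq_natAbs, Int.cast_natCast]
    rw [habs]
    ring
  · intro hodd
    have : IsEmpty {p : ℕ → ℤ // IsFirstVisitPath n x p} :=
      ⟨fun q => hodd (path_parity n x q.1 q.2)⟩
    unfold firstVisitProb
    exact tsum_empty
end

section
/- Consider the open quantum random walk on the four sites {1,2,3,4} with internal dimension k, determined by k×k matrices L, R with L*L + R*R = I, via the transition matrices B₁¹ = I, B₂¹ = L, B₂³ = R, B₃² = L, B₃⁴ = R, B₄⁴ = I, and all other B_i^j = 0 (so sites 1 and 4 are absorbing). Let η be a density matrix which is an eigenmatrix of the conjugation by LR: (LR) η (LR)* = λ η for some real λ with 0 ≤ λ < 1. Then the hitting probability of site 4 starting from site 2 with internal state η is h₂^{{4}}(η) = tr( R² η (R²)* ) / (1 − λ). Explicitly, the first-passage paths from 2 to {4} have path operators R²(LR)^m, m ≥ 0, and ∑_{m=0}^∞ tr( R²(LR)^m η ((LR)^m)*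 (R²)* ) = tr(R² η (R²)*)/(1 − λ). -/
open Matrix ComplexOrder

/-- The transition matrices of the four-site walk: B₁¹ = I, B₂¹ = L, B₂³ = R,
B₃² = L, B₃⁴ = R, B₄⁴ = I, and all other B_i^j = 0 (sites 1 and 4 absorbing). -/
noncomputable def fourSiteB {k : ℕ} (L R : Matrix (Fin k) (Fin k) ℂ) :
    ℤ → ℤ → Matrix (Fin k) (Fin k) ℂ := fun i j =>
  if i = 1 ∧ j = 1 then 1
  else if i = 2 ∧ j = 1 then L
  else if i = 2 ∧ j = 3 then R
  else if i = 3 ∧ j = 2 then L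
  else if i = 3 ∧ j = 4 then R
  else if i = 4 ∧ j = 4 then 1
  else 0

noncomputable def po {k : ℕ} (B : ℤ → ℤ → Matrix (Fin k) (Fin k) ℂ) (x : ℕ → ℤ) :
    ℕ → Matrix (Fin k) (Fin k) ℂ
  | 0 => 1
  | n+1 => B (x n) (x (n+1)) * po B x n

lemma foldl_eq_po {k : ℕ} (B : ℤ → ℤ → Matrix (Fin k) (Fin k) ℂ) (x : ℕ → ℤ) (n : ℕ) :
    (List.range n).foldl (fun M m => B (x m) (x (m + 1)) * M) 1 = po B x n := by
  induction n with
  | zero => rfl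
  | succ n ih => rw [List.range_succ, List.foldl_append, ih]; rfl

lemma pathOp_eq_po {k : ℕ} (B : ℤ → ℤ → Matrix (Fin k) (Fin k) ℂ)
    {A : Set ℤ} {i : ℤ} (p : FPPath A i) : pathOp B p = po B p.x p.r :=
  foldl_eq_po B p.x p.r

lemma po_zero {k : ℕ} (B : ℤ → ℤ → Matrix (Fin k) (Fin k) ℂ) (x : ℕ → ℤ) (n : ℕ)
    (h : ∃ j < n, B (x j) (x (j+1)) = 0) : po B x n = 0 := by
  induction n with
  | zero => obtain ⟨j, hj, _⟩ := h; omega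
  | succ n ih =>
    obtain ⟨j, hj, hz⟩ := h
    rcases Nat.lt_succ_iff_lt_or_eq.1 hj with hj | rfl
    · rw [po, ih ⟨j, hj, hz⟩, mul_zero]
    · rw [po, hz, zero_mul]

lemma po_shift {k : ℕ} (B : ℤ → ℤ → Matrix (Fin k) (Fin k) ℂ) (x : ℕ → ℤ) (n : ℕ) :
    po B x (n+2) = po B (fun i => x (i+2)) n * (B (x 1) (x 2) * (B (x 0) (x 1))) := by
  induction n with
  | zero => show po B x 2 = 1 * _; rw [one_mul]; show _ * (_ * 1) = _; rw [mul_one]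
  | succ n ih =>
    show B (x (n+2)) (x (n+3)) * po B x (n+2) = (B _ _ * po B _ n) * _
    rw [ih, mul_assoc]

def cx (m : ℕ) : ℕ → ℤ := fun n => if 2*m+2 ≤ n then 4 else if n % 2 = 0 then 2 else 3

def cpath (m : ℕ) : FPPath {4} 2 where
  r := 2*m+2
  x := cx m
  hr := by omega
  hx0 := by simp [cx]
  hmid := fun n hn => by
    simp only [cx, Set.mem_singleton_iff]
    split_ifs <;> omega
  hlast := by simp [cx]
  htail := fun n hn => by simp [cx, hn]

lemma B23 {k : ℕ} (L R : Matrix (Fin k) (Fin k) ℂ) : fourSiteB L R 2 3 = R := by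
  simp [fourSiteB]
lemma B32 {k : ℕ} (L R : Matrix (Fin k) (Fin k) ℂ) : fourSiteB L R 3 2 = L := by
  simp [fourSiteB]
lemma B34 {k : ℕ} (L R : Matrix (Fin k) (Fin k) ℂ) : fourSiteB L R 3 4 = R := by
  simp [fourSiteB]

lemma B_eq_zero {k : ℕ} (L R : Matrix (Fin k) (Fin k) ℂ) {i j : ℤ}
    (h1 : ¬(i=1∧j=1)) (h2 : ¬(i=2∧j=1)) (h3 : ¬(i=2∧j=3)) (h4 : ¬(i=3∧j=2))
    (h5 : ¬(i=3∧j=4)) (h6 : ¬(i=4∧j=4)) : fourSiteB L R i j = 0 := by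
  simp only [fourSiteB, if_neg h1, if_neg h2, if_neg h3, if_neg h4, if_neg h5, if_neg h6]

lemma B_ne_zero {k : ℕ} (L R : Matrix (Fin k) (Fin k) ℂ) {i j : ℤ}
    (h : fourSiteB L R i j ≠ 0) :
    (i=1∧j=1)∨(i=2∧j=1)∨(i=2∧j=3)∨(i=3∧j=2)∨(i=3∧j=4)∨(i=4∧j=4) := by
  by_contra hc
  exact h (B_eq_zero L R (by tauto) (by tauto) (by tauto) (by tauto) (by tauto) (by tauto))

lemma cx_shift (m : ℕ) : (fun i => cx (m+1) (i+2)) = cx m := by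
  funext n
  simp only [cx]
  split_ifs <;> omega

lemma cx_lt {m n : ℕ} (h : n < 2*m+2) : cx m n = if n % 2 = 0 then 2 else 3 := by
  simp only [cx]
  rw [if_neg (by omega)]

lemma po_cpath {k : ℕ} (L R : Matrix (Fin k) (Fin k) ℂ) (m : ℕ) :
    po (fourSiteB L R) (cx m) (2*m+2) = R^2 * (L*R)^m := by
  induction m with
  | zero =>
    have c0 : cx 0 0 = 2 := by simp [cx]
    have c1 : cx 0 1 = 3 := by simp [cx]
    have c2 : cx 0 2 = 4 := by simp [cx]
    show fourSiteB L R (cx 0 1) (cx 0 2) * (fourSiteB L R (cx 0 0) (cx 0 1) * 1) = _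
    rw [c0, c1, c2, B23, B34, mul_one, pow_zero, mul_one, pow_two]
  | succ m ih =>
    have hr : 2*(m+1)+2 = (2*m+2)+2 := by omega
    have c0 : cx (m+1) 0 = 2 := by simp [cx]
    have c1 : cx (m+1) 1 = 3 := by rw [cx_lt (by omega)]; norm_num
    have c2 : cx (m+1) 2 = 2 := by rw [cx_lt (by omega)]; norm_num
    rw [hr, po_shift, cx_shift, ih, c0, c1, c2, B23, B32, mul_assoc, ← pow_succ]

lemma classify {k : ℕ} (L R : Matrix (Fin k) (Fin k) ℂ) (p : FPPath {4} 2)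
    (hB : ∀ j, j < p.r → fourSiteB L R (p.x j) (p.x (j+1)) ≠ 0) :
    ∃ m, p = cpath m := by
  obtain ⟨r, x, hr, hx0, hmid, hlast, htail⟩ := p
  simp only at hB hx0 hmid hlast htail ⊢
  rw [Set.mem_singleton_iff] at hlast
  have hv : ∀ j, j < r →
      (x j=1∧x (j+1)=1)∨(x j=2∧x (j+1)=1)∨(x j=2∧x (j+1)=3)∨
      (x j=3∧x (j+1)=2)∨(x j=3∧x (j+1)=4)∨(x j=4∧x (j+1)=4) :=
    fun j hj => B_ne_zero L R (hB j hj)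
  -- no state 1 is ever visited before r
  have key : ∀ j, j ≤ r → x j ≠ 1 := by
    intro j hj h1
    have prop : ∀ d, j + d ≤ r → x (j + d) = 1 := by
      intro d
      induction d with
      | zero => intro _; simpa using h1
      | succ d ih =>
        intro hd
        have hlt : j + d < r := by omega
        rcases hv _ hlt with h|h|h|h|h|h <;>
          first
          | (exact (by omega : j + (d+1) = (j+d) + 1) ▸ h.2)
          | (exfalso; have := ih (by omega); omega)
    have := prop (r - j) (by omega)
    rw [(by omega : j + (r - j) = r), hlast] at this
    omega
  have pattern : ∀ n, n < r → x n = if n % 2 = 0 then 2 else 3 := by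
    intro n
    induction n with
    | zero => intro _; simpa using hx0
    | succ n ih =>
      intro hn
      have hn' : n < r := by omega
      have hxn := ih hn'
      have hmid' := hmid (n+1) hn
      rw [Set.mem_singleton_iff] at hmid'
      rcases hv n hn' with h|h|h|h|h|h
      · exact absurd h.1 (key n (by omega))
      · exact absurd h.2 (key (n+1) (by omega))
      · have : n % 2 = 0 := by by_contra hc; rw [if_neg hc] at hxn; omega
        rw [if_neg (by omega)]
        exact h.2
      · have : n % 2 = 1 := by
          by_contra hc
          rw [if_pos (by omega)] at hxn
          omega
        rw [if_pos (by omega)]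
        exact h.2
      · exact absurd h.2 hmid'
      · have := hmid n hn'
        rw [Set.mem_singleton_iff] at this
        exact absurd h.1 this
  -- last step: x (r-1) = 3, so r is even
  have hrm : r - 1 < r := by omega
  have hlaststep := hv (r-1) hrm
  rw [(by omega : r - 1 + 1 = r), hlast] at hlaststep
  have hx3 : x (r-1) = 3 := by
    have h4 := hmid (r-1) hrm
    rw [Set.mem_singleton_iff] at h4
    rcases hlaststep with h|h|h|h|h|h <;> first | omega | (exact h.1) | (exact absurd h.1 h4)
  have hodd : (r-1) % 2 = 1 := by
    have := pattern (r-1) hrm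
    by_contra hc
    rw [if_pos (by omega)] at this
    omega
  obtain ⟨m, hm⟩ : ∃ m, r = 2*m+2 := ⟨r/2 - 1, by omega⟩
  refine ⟨m, ?_⟩
  have hxeq : x = cx m := by
    funext n
    by_cases hn : n < r
    · rw [pattern n hn, cx_lt (by omega)]
    · rw [htail n (by omega), hlast]
      simp [cx]
      omega
  subst hm hxeq
  rfl

lemma cpath_inj : Function.Injective cpath := by
  intro a b h
  have := congrArg FPPath.r h
  simp only [cpath] at this
  omega

/-- for the four-site OQRW determined by L, R with L*L + R*R = I, and
a density matrix η with (LR) η (LR)* = λ η, 0 ≤ λ < 1, the hitting probability of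
site 4 from site 2 with internal state η is tr(R² η (R²)*)/(1 − λ); explicitly the
first-passage path operators are R²(LR)^m, m ≥ 0, and the corresponding series sums
to tr(R² η (R²)*)/(1 − λ). -/
theorem four_site_hitting_probability (k : ℕ) (hk : 1 ≤ k)
    (L R : Matrix (Fin k) (Fin k) ℂ)
    (hunit : Lᴴ * L + Rᴴ * R = 1)
    (η : Matrix (Fin k) (Fin k) ℂ) (hη : η.PosSemidef) (htr : Matrix.trace η = 1)
    (lam : ℝ) (hlam0 : 0 ≤ lam) (hlam1 : lam < 1)
    (heig : (L * R) * η * (L * R)ᴴ = ((lam : ℝ) : ℂ) • η) :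
    hitProb (fourSiteB L R) {4} 2 η =
      (Matrix.trace (R ^ 2 * η * (R ^ 2)ᴴ)).re / (1 - lam) ∧
    ∑' m : ℕ,
        (Matrix.trace ((R ^ 2 * (L * R) ^ m) * η * (R ^ 2 * (L * R) ^ m)ᴴ)).re =
      (Matrix.trace (R ^ 2 * η * (R ^ 2)ᴴ)).re / (1 - lam) := by
  have hpow : ∀ m : ℕ, (L*R)^m * η * ((L*R)^m)ᴴ = ((lam^m : ℝ) : ℂ) • η := by
    intro m
    induction m with
    | zero => simp
    | succ m ih =>
      rw [pow_succ', conjTranspose_mul, ← mul_assoc, mul_assoc (L*R*(L*R)^m) η,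
        mul_assoc (L*R) ((L*R)^m), ← mul_assoc ((L*R)^m) η, ih, mul_smul_comm, smul_mul_assoc, heig,
        smul_smul]
      push_cast
      rfl
  have hterm : ∀ m : ℕ,
      (Matrix.trace ((R^2*(L*R)^m) * η * (R^2*(L*R)^m)ᴴ)).re
        = lam^m * (Matrix.trace (R^2*η*(R^2)ᴴ)).re := by
    intro m
    have h1 : (R^2*(L*R)^m) * η * (R^2*(L*R)^m)ᴴ
        = R^2 * ((L*R)^m * η * ((L*R)^m)ᴴ) * (R^2)ᴴ := by
      rw [conjTranspose_mul]
      simp only [mul_assoc]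
    rw [h1, hpow m, mul_smul_comm, smul_mul_assoc, Matrix.trace_smul, smul_eq_mul,
      Complex.re_ofReal_mul]
  have hsum : ∑' m : ℕ,
      (Matrix.trace ((R ^ 2 * (L * R) ^ m) * η * (R ^ 2 * (L * R) ^ m)ᴴ)).re
        = (Matrix.trace (R ^ 2 * η * (R ^ 2)ᴴ)).re / (1 - lam) := by
    simp_rw [hterm]
    rw [tsum_mul_right, tsum_geometric_of_lt_one hlam0 hlam1, div_eq_mul_inv, mul_comm]
  refine ⟨?_, hsum⟩
  set f : FPPath {4} 2 → ℝ :=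
    fun p => (Matrix.trace (pathOp (fourSiteB L R) p * η * (pathOp (fourSiteB L R) p)ᴴ)).re
    with hf
  have hsupp : Function.support f ⊆ Set.range cpath := by
    intro p hp
    rcases Classical.em (∀ j, j < p.r → fourSiteB L R (p.x j) (p.x (j+1)) ≠ 0) with h | h
    · obtain ⟨m, hm⟩ := classify L R p h
      exact ⟨m, hm.symm⟩
    · exfalso
      apply hp
      push_neg at h
      obtain ⟨j, hj, hz⟩ := h
      show (Matrix.trace (pathOp (fourSiteB L R) p * η * (pathOp (fourSiteB L R) p)ᴴ)).re = 0
      rw [pathOp_eq_po, po_zero _ _ _ ⟨j, hj, hz⟩]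
      simp
  have hfc : ∀ m : ℕ, f (cpath m)
      = (Matrix.trace ((R ^ 2 * (L * R) ^ m) * η * (R ^ 2 * (L * R) ^ m)ᴴ)).re := by
    intro m
    have : pathOp (fourSiteB L R) (cpath m) = R^2 * (L*R)^m := by
      rw [pathOp_eq_po]
      exact po_cpath L R m
    rw [hf]
    simp only [this]
  rw [hitProb, if_neg (by norm_num), ← hsum]
  calc (∑' p : FPPath {4} 2, (Matrix.trace (pathOp (fourSiteB L R) p * η * (pathOp (fourSiteB L R) p)ᴴ)).re)
      = ∑' m : ℕ, f (cpath m) := (cpath_inj.tsum_eq hsupp).symm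
    _ = _ := tsum_congr hfc
end
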